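/- arXiv:2410.22130 — 2 statements merged into one kernel-verified Lean document; each statement's English description precedes it below -/
import Mathlib

section
/- Every stable model of G₁(Π), restricted to the atoms of G₀(Π), is a stable model of G₀(Π); consequently the number of stable models of G₁(Π) is at most the number of stable models of G₀(Π). -/
/-! Framework for (epistemic) logic programs:
objective literals, rules, programs, reducts, stable models,
subjective literals, subjective reducts, worldviews, and the
generate-and-test programs T₀, G₀, kp, G₁. -/

/-- Extended objective literals over an atom type `α`:
an atom, a negated atom, a doubly negated atom, or a truth constant. -/
inductive Lit (α : Type) : Type
  | pos (a : α)
  | neg (a : α)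
  | nneg (a : α)
  | top
  | bot

namespace Lit

/-- Satisfaction of an extended objective literal by an interpretation. -/
def sat {α : Type} (I : Set α) : Lit α → Prop
  | .pos a => a ∈ I
  | .neg a => a ∉ I
  | .nneg a => a ∈ I
  | .top => True
  | .bot => False

/-- A literal is negated if it is of the form `¬a` or `¬¬a`. -/
def isNeg {α : Type} : Lit α → Prop
  | .neg _ => True
  | .nneg _ => True
  | _ => False

/-- Rename atoms in a literal. -/
def map {α β : Type} (f : α → β) : Lit α → Lit β
  | .pos a => .pos (f a)
  | .neg a => .neg (f a)
  | .nneg a => .nneg (f a)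
  | .top => .top
  | .bot => .bot

/-- The atoms occurring in a literal. -/
def atoms {α : Type} : Lit α → Set α
  | .pos a => {a}
  | .neg a => {a}
  | .nneg a => {a}
  | _ => ∅

end Lit

/-- An objective rule `a₁ ∨ ... ∨ aₙ ← L₁,...,Lₘ`. -/
structure Rule (α : Type) where
  head : Set α
  body : Set (Lit α)

/-- An objective program: a set of rules. -/
abbrev Program (α : Type) := Set (Rule α)

/-- A rule is satisfied by `I` if `I` satisfies some head atom
whenever it satisfies all body literals. -/
def Rule.sat {α : Type} (I : Set α) (r : Rule α) : Prop :=
  (∀ L ∈ r.body, L.sat I) → ∃ a ∈ r.head, a ∈ I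

/-- A model of a program satisfies all its rules. -/
def isModel {α : Type} (I : Set α) (P : Program α) : Prop := ∀ r ∈ P, r.sat I

/-- The reduct of a program with respect to `I`: drop rules with an unsatisfied
negated body literal; delete negated literals from the remaining rules. -/
def reduct {α : Type} (P : Program α) (I : Set α) : Program α :=
  { r' | ∃ r ∈ P, (∀ L ∈ r.body, L.isNeg → L.sat I) ∧
      r' = ⟨r.head, {L | L ∈ r.body ∧ ¬ L.isNeg}⟩ }

/-- `I` is a stable model of `P` iff it is a ⊆-minimal model of the reduct `P^I`. -/
def isStable {α : Type} (P : Program α) (I : Set α) : Prop :=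
  isModel I (reduct P I) ∧ ∀ J ⊆ I, isModel J (reduct P I) → J = I

/-- The set of stable models of a program. -/
def SM {α : Type} (P : Program α) : Set (Set α) := { I | isStable P I }

/-- A program extended with assumption constraints `⊥ ← ¬a` (for `a ∈ Apos`)
and `⊥ ← a` (for `a ∈ Aneg`). -/
def withAssumption {α : Type} (P : Program α) (Apos Aneg : Set α) : Program α :=
  P ∪ ((fun a => (⟨∅, {Lit.neg a}⟩ : Rule α)) '' Apos)
    ∪ ((fun a => (⟨∅, {Lit.pos a}⟩ : Rule α)) '' Aneg)

/-- Stable models of `P` under an assumption. -/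
def SMA {α : Type} (P : Program α) (Apos Aneg : Set α) : Set (Set α) :=
  SM (withAssumption P Apos Aneg)

/-- Literals of epistemic programs: an objective literal, or a subjective
atom `K l` preceded by zero, one, or two negations. -/
inductive SLit (α : Type) : Type
  | obj (l : Lit α)
  | k (l : Lit α)
  | nk (l : Lit α)
  | nnk (l : Lit α)

/-- An epistemic rule. -/
structure ERule (α : Type) where
  head : Set α
  body : Set (SLit α)

/-- An epistemic program: a set of epistemic rules. -/
abbrev EProgram (α : Type) := Set (ERule α)

/-- `W ⊨ K l`: every interpretation in `W` satisfies `l`. -/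
def satK {α : Type} (W : Set (Set α)) (l : Lit α) : Prop := ∀ I ∈ W, l.sat I

open scoped Classical in
/-- Replace a subjective literal by `⊤`/`⊥` according to `W`; objective
literals are unchanged. -/
noncomputable def SLit.reduce {α : Type} (W : Set (Set α)) : SLit α → Lit α
  | .obj l => l
  | .k l => if satK W l then .top else .bot
  | .nk l => if satK W l then .bot else .top
  | .nnk l => if satK W l then .top else .bot

/-- The subjective reduct `P^W`. -/
noncomputable def subjReduct {α : Type} (P : EProgram α) (W : Set (Set α)) : Program α :=
  (fun r : ERule α => (⟨r.head, (SLit.reduce W) '' r.body⟩ : Rule α)) '' P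

/-- A worldview: a non-empty set of interpretations `W` with `W = SM(P^W)`. -/
def isWorldview {α : Type} (P : EProgram α) (W : Set (Set α)) : Prop :=
  W.Nonempty ∧ W = SM (subjReduct P W)

/-- Normal-form subjective literals: `K a`, `¬K a`, `¬¬K a` with `a` an atom. -/
def SLit.isNormal {α : Type} : SLit α → Prop
  | .obj _ => True
  | .k (.pos _) => True
  | .nk (.pos _) => True
  | .nnk (.pos _) => True
  | _ => False

/-- A program is in normal form if negation does not occur in the scope of `K`. -/
def isNormalForm {α : Type} (P : EProgram α) : Prop :=
  ∀ r ∈ P, ∀ L ∈ r.body, L.isNormal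

/-- The atoms `a` such that a subjective atom `K a` occurs in the program; the
corresponding fresh atoms `ka` are represented as `Sum.inr a`. -/
def KAtoms {α : Type} (P : EProgram α) : Set α :=
  { a | ∃ r ∈ P, SLit.k (Lit.pos a) ∈ r.body ∨ SLit.nk (Lit.pos a) ∈ r.body ∨
        SLit.nnk (Lit.pos a) ∈ r.body }

/-- Replace subjective literals on `K a` by objective literals on the fresh
atom `ka = Sum.inr a`; original atoms become `Sum.inl a`. -/
def SLit.t0 {α : Type} : SLit α → Lit (α ⊕ α)
  | .obj l => l.map Sum.inl
  | .k (.pos a) => .pos (Sum.inr a)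
  | .nk (.pos a) => .neg (Sum.inr a)
  | .nnk (.pos a) => .nneg (Sum.inr a)
  | _ => .bot

/-- The tester program `T₀(P)`: `k(P)` plus a choice rule `{ka}`
(i.e. `ka ← ¬¬ka`) for each `ka ∈ K(P)`. -/
def T0 {α : Type} (P : EProgram α) : Program (α ⊕ α) :=
  ((fun r : ERule α => (⟨Sum.inl '' r.head, SLit.t0 '' r.body⟩ : Rule (α ⊕ α))) '' P)
  ∪ ((fun a => (⟨{Sum.inr a}, {Lit.nneg (Sum.inr a)}⟩ : Rule (α ⊕ α))) '' KAtoms P)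

/-- The generator program `G₀(P)`: `T₀(P)` plus consistency constraints
`⊥ ← ka, ¬a` for each `ka ∈ K(P)`. -/
def G0 {α : Type} (P : EProgram α) : Program (α ⊕ α) :=
  T0 P ∪ ((fun a => (⟨∅, {Lit.pos (Sum.inr a), Lit.neg (Sum.inl a)}⟩ : Rule (α ⊕ α))) '' KAtoms P)

/-- `k(M) = M ∩ K(P)`, read as a set of original atoms. -/
def kOfM {α : Type} (M : Set (α ⊕ α)) : Set α := { a | Sum.inr a ∈ M }

/-- `k(W) = {ka ∈ K(P) : W ⊨ K a}`, read as a set of original atoms. -/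
def kOfW {α : Type} (P : EProgram α) (W : Set (Set α)) : Set α :=
  { a | a ∈ KAtoms P ∧ ∀ I ∈ W, a ∈ I }

/-- Restriction of an interpretation to the original atoms `At(P)`. -/
def restr {α : Type} (M : Set (α ⊕ α)) : Set α := { a | Sum.inl a ∈ M }

/-- The positive part of the assumption determined by a set `S` of K-atoms:
`ka` for each `ka ∈ K(P)` with `a ∈ S`. -/
def asmP {α : Type} (P : EProgram α) (S : Set α) : Set (α ⊕ α) := Sum.inr '' (S ∩ KAtoms P)

/-- The negative part of the assumption determined by a set `S` of K-atoms:
`¬ka` for each `ka ∈ K(P)` with `a ∉ S`. -/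
def asmN {α : Type} (P : EProgram α) (S : Set α) : Set (α ⊕ α) := Sum.inr '' (KAtoms P \ S)

/-- A generator program for `P`. -/
def isGenerator {α : Type} (P : EProgram α) (G : Program (α ⊕ α)) : Prop :=
  (∀ W, isWorldview P W → ∃ M ∈ SM G, kOfM M = kOfW P W ∧ restr M ∈ W) ∧
  (∀ M ∈ SM G, ∀ W : Set (Set α), kOfW P W = kOfM M → restr M ∈ SM (subjReduct P W))

/-- A tester program for `P`: a non-empty `W` is a worldview of `P` iff
`W` equals the restriction to `At(P)` of `SM(T; k(W))`. -/
def isTester {α : Type} (P : EProgram α) (T : Program (α ⊕ α)) : Prop :=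
  ∀ W : Set (Set α), W.Nonempty →
    (isWorldview P W ↔ W = restr '' SMA T (asmP P (kOfW P W)) (asmN P (kOfW P W)))

/-- Atoms of the extended signature for the propagation program: original
atoms and `ka`-atoms (left) plus fresh atoms `kp_a`, `kn_a`, `kn_r` (right). -/
abbrev PExt (α : Type) : Type := (α ⊕ α) ⊕ (α ⊕ (α ⊕ ERule α))

/-- An original atom `a` in the extended signature. -/
def aE {α : Type} (a : α) : PExt α := Sum.inl (Sum.inl a)

/-- The atom `ka` in the extended signature. -/
def kaE {α : Type} (a : α) : PExt α := Sum.inl (Sum.inr a)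

/-- The fresh propagation atom `kp_a`. -/
def kpA {α : Type} (a : α) : PExt α := Sum.inr (Sum.inl a)

/-- The fresh propagation atom `kn_a`. -/
def knA {α : Type} (a : α) : PExt α := Sum.inr (Sum.inr (Sum.inl a))

/-- The fresh propagation atom `kn_r` for a rule `r`. -/
def knR {α : Type} (r : ERule α) : PExt α := Sum.inr (Sum.inr (Sum.inr r))

/-- Translation of a body literal for the rules defining `kp_a`. -/
def SLit.kpBody {α : Type} : SLit α → Lit (PExt α)
  | .obj (.pos a) => .pos (kpA a)
  | .obj (.neg a) => .pos (knA a)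
  | .k (.pos a) => .pos (kaE a)
  | .nk (.pos a) => .neg (kaE a)
  | .nnk (.pos a) => .nneg (kaE a)
  | _ => .bot

/-- Translation of a body literal for the rules defining `kn_r`
(the "complement" of the literal). -/
def SLit.knBody {α : Type} : SLit α → Lit (PExt α)
  | .obj (.pos a) => .pos (knA a)
  | .obj (.neg a) => .pos (kpA a)
  | .k (.pos a) => .neg (kaE a)
  | .nk (.pos a) => .pos (kaE a)
  | .nnk (.pos a) => .neg (kaE a)
  | _ => .top

/-- The atoms occurring in a subjective literal. -/
def SLit.atoms {α : Type} : SLit α → Set α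
  | .obj l => l.atoms
  | .k l => l.atoms
  | .nk l => l.atoms
  | .nnk l => l.atoms

/-- The atoms occurring in an epistemic program. -/
def AtE {α : Type} (P : EProgram α) : Set α :=
  { a | ∃ r ∈ P, a ∈ r.head ∨ ∃ L ∈ r.body, a ∈ L.atoms }

/-- The epistemic-propagation program `kp(P)`:
rules `kp_{a} ← ...` for single-atom-head rules, rules `kn_r ← ...` for all
rules, and completion rules `kn_a ← kn_{r₁},...,kn_{rₖ}`. -/
def kpProg {α : Type} (P : EProgram α) : Program (PExt α) :=
  { r' | ∃ r ∈ P, ∃ a : α, r.head = {a} ∧ r' = ⟨{kpA a}, SLit.kpBody '' r.body⟩ }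
  ∪ { r' | ∃ r ∈ P, ∃ L ∈ r.body, r' = ⟨{knR r}, {L.knBody}⟩ }
  ∪ { r' | ∃ a ∈ AtE P,
        r' = ⟨{knA a}, (fun r => Lit.pos (knR r)) '' { r ∈ P | a ∈ r.head }⟩ }

/-- Rename the atoms of a rule. -/
def Rule.mapAtoms {α β : Type} (f : α → β) (r : Rule α) : Rule β :=
  ⟨f '' r.head, (Lit.map f) '' r.body⟩

/-- `G₀(P)` viewed over the extended signature. -/
def G0ext {α : Type} (P : EProgram α) : Program (PExt α) :=
  (Rule.mapAtoms Sum.inl) '' (G0 P)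

/-- The generator program `G₁(P)`: `G₀(P)` together with the propagation
program `kp(P)` and consistency constraints `⊥ ← kp_a, ¬ka`. -/
def G1 {α : Type} (P : EProgram α) : Program (PExt α) :=
  G0ext P ∪ kpProg P
  ∪ { r' | ∃ a ∈ KAtoms P, r' = ⟨∅, {Lit.pos (kpA a), Lit.neg (kaE a)}⟩ }

namespace G1G0Proof

variable {α β : Type}

/-- Restriction of an extended interpretation to the left (original) atoms. -/
def lp (M : Set (PExt α)) : Set (α ⊕ α) := {x | Sum.inl x ∈ M}

lemma isNeg_map (f : β → PExt α) (L : Lit β) : (L.map f).isNeg ↔ L.isNeg := by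
  cases L <;> simp [Lit.map, Lit.isNeg]

lemma sat_map_inl (M : Set (PExt α)) (L : Lit (α ⊕ α)) :
    (L.map Sum.inl).sat M ↔ L.sat (lp M) := by
  cases L <;> simp [Lit.map, Lit.sat, lp]

lemma sat_mono {M N : Set β} (h : N ⊆ M) {L : Lit β} (hL : ¬ L.isNeg) (hs : L.sat N) :
    L.sat M := by
  cases L with
  | pos a => exact h hs
  | neg a => exact absurd trivial hL
  | nneg a => exact absurd trivial hL
  | top => trivial
  | bot => exact hs.elim

/-- The positive part of a rule (what survives the reduct). -/
def strip (r : Rule β) : Rule β := ⟨r.head, {L | L ∈ r.body ∧ ¬ L.isNeg}⟩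

lemma mem_reduct {Q : Program β} {I : Set β} {r : Rule β} (hr : r ∈ Q)
    (hc : ∀ L ∈ r.body, L.isNeg → L.sat I) : strip r ∈ reduct Q I :=
  ⟨r, hr, hc, rfl⟩

lemma strip_map (r : Rule (α ⊕ α)) :
    strip (r.mapAtoms (Sum.inl : (α ⊕ α) → PExt α))
      = (strip r).mapAtoms (Sum.inl : (α ⊕ α) → PExt α) := by
  unfold strip Rule.mapAtoms
  congr 1
  ext L'
  constructor
  · rintro ⟨⟨L, hL, rfl⟩, hn⟩
    exact ⟨L, ⟨hL, fun h => hn ((isNeg_map _ _).mpr h)⟩, rfl⟩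
  · rintro ⟨L, ⟨hL, hn⟩, rfl⟩
    exact ⟨⟨L, hL, rfl⟩, fun h => hn ((isNeg_map _ _).mp h)⟩

lemma sat_mapAtoms (r : Rule (α ⊕ α)) (M : Set (PExt α)) :
    (r.mapAtoms Sum.inl).sat M ↔ r.sat (lp M) := by
  constructor
  · intro h hb
    obtain ⟨a, ⟨b, hbh, rfl⟩, haM⟩ :=
      h (by rintro L' ⟨L, hL, rfl⟩; exact (sat_map_inl M L).mpr (hb L hL))
    exact ⟨b, hbh, haM⟩
  · intro h hb
    obtain ⟨b, hbh, hbM⟩ := h (fun L hL => (sat_map_inl M L).mp (hb _ ⟨L, hL, rfl⟩))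
    exact ⟨Sum.inl b, ⟨b, hbh, rfl⟩, hbM⟩

lemma cond_map (r : Rule (α ⊕ α)) (M : Set (PExt α)) :
    (∀ L ∈ (r.mapAtoms Sum.inl).body, L.isNeg → L.sat M) ↔
    (∀ L ∈ r.body, L.isNeg → L.sat (lp M)) := by
  constructor
  · intro h L hL hn
    exact (sat_map_inl M L).mp (h _ ⟨L, hL, rfl⟩ ((isNeg_map _ _).mpr hn))
  · rintro h L' ⟨L, hL, rfl⟩ hn
    exact (sat_map_inl M L).mpr (h L hL ((isNeg_map _ _).mp hn))

lemma kpBody_shape (s : SLit α) (hn : (s.kpBody).isNeg) :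
    ∃ x : α ⊕ α, s.kpBody = Lit.neg (Sum.inl x) ∨ s.kpBody = Lit.nneg (Sum.inl x) := by
  cases s with
  | obj l => cases l <;> exact absurd hn (by simp [SLit.kpBody, Lit.isNeg])
  | k l => cases l <;> exact absurd hn (by simp [SLit.kpBody, Lit.isNeg])
  | nk l =>
    cases l with
    | pos a => exact ⟨Sum.inr a, Or.inl rfl⟩
    | _ => exact absurd hn (by simp [SLit.kpBody, Lit.isNeg])
  | nnk l =>
    cases l with
    | pos a => exact ⟨Sum.inr a, Or.inr rfl⟩
    | _ => exact absurd hn (by simp [SLit.kpBody, Lit.isNeg])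

lemma knBody_shape (s : SLit α) (hn : (s.knBody).isNeg) :
    ∃ x : α ⊕ α, s.knBody = Lit.neg (Sum.inl x) ∨ s.knBody = Lit.nneg (Sum.inl x) := by
  cases s with
  | obj l => cases l <;> exact absurd hn (by simp [SLit.knBody, Lit.isNeg])
  | k l =>
    cases l with
    | pos a => exact ⟨Sum.inr a, Or.inl rfl⟩
    | _ => exact absurd hn (by simp [SLit.knBody, Lit.isNeg])
  | nk l => cases l <;> exact absurd hn (by simp [SLit.knBody, Lit.isNeg])
  | nnk l =>
    cases l with
    | pos a => exact ⟨Sum.inr a, Or.inl rfl⟩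
    | _ => exact absurd hn (by simp [SLit.knBody, Lit.isNeg])

lemma G1_neg_shape (P : EProgram α) {r : Rule (PExt α)} (hrG : r ∈ G1 P) :
    ∀ L ∈ r.body, L.isNeg →
      ∃ x : α ⊕ α, L = Lit.neg (Sum.inl x) ∨ L = Lit.nneg (Sum.inl x) := by
  intro L hL hn
  rcases hrG with (hg | hk) | hc
  · obtain ⟨r₀, -, rfl⟩ := hg
    obtain ⟨L₀, -, rfl⟩ := hL
    cases L₀ with
    | pos a => exact absurd hn (by simp [Lit.map, Lit.isNeg])
    | neg a => exact ⟨a, Or.inl rfl⟩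
    | nneg a => exact ⟨a, Or.inr rfl⟩
    | top => exact absurd hn (by simp [Lit.map, Lit.isNeg])
    | bot => exact absurd hn (by simp [Lit.map, Lit.isNeg])
  · rcases hk with (h1 | h2) | h3
    · obtain ⟨r₀, -, a, -, rfl⟩ := h1
      obtain ⟨s, -, rfl⟩ := hL
      exact kpBody_shape s hn
    · obtain ⟨r₀, -, L₀, -, rfl⟩ := h2
      rw [Set.mem_singleton_iff] at hL
      subst hL
      exact knBody_shape L₀ hn
    · obtain ⟨a, -, rfl⟩ := h3
      obtain ⟨r₀, -, rfl⟩ := hL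
      exact absurd hn (by simp [Lit.isNeg])
  · obtain ⟨a, -, rfl⟩ := hc
    simp only [Set.mem_insert_iff, Set.mem_singleton_iff] at hL
    rcases hL with rfl | rfl
    · exact absurd hn (by simp [Lit.isNeg])
    · exact ⟨Sum.inr a, Or.inl rfl⟩

lemma sat_shape_transfer {M₁ M₂ : Set (PExt α)} (h : lp M₁ = lp M₂) {L : Lit (PExt α)}
    (hs : ∃ x : α ⊕ α, L = Lit.neg (Sum.inl x) ∨ L = Lit.nneg (Sum.inl x)) :
    L.sat M₁ ↔ L.sat M₂ := by
  obtain ⟨x, rfl | rfl⟩ := hs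
  · have hx : Sum.inl x ∈ M₁ ↔ Sum.inl x ∈ M₂ := Set.ext_iff.mp h x
    exact not_congr hx
  · exact Set.ext_iff.mp h x

lemma reduct_G1_eq (P : EProgram α) {M₁ M₂ : Set (PExt α)} (h : lp M₁ = lp M₂) :
    reduct (G1 P) M₁ = reduct (G1 P) M₂ := by
  ext r'
  constructor <;> rintro ⟨r, hrG, hc, rfl⟩ <;> refine ⟨r, hrG, fun L hL hn => ?_, rfl⟩
  · exact (sat_shape_transfer h (G1_neg_shape P hrG L hL hn)).mp (hc L hL hn)
  · exact (sat_shape_transfer h (G1_neg_shape P hrG L hL hn)).mpr (hc L hL hn)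

lemma kpProg_head_single {P : EProgram α} {r : Rule (PExt α)} (hk : r ∈ kpProg P) :
    ∃ y : α ⊕ (α ⊕ ERule α), r.head = {Sum.inr y} := by
  rcases hk with (h1 | h2) | h3
  · obtain ⟨r₀, -, a, -, rfl⟩ := h1
    exact ⟨Sum.inl a, rfl⟩
  · obtain ⟨r₀, -, L₀, -, rfl⟩ := h2
    exact ⟨Sum.inr (Sum.inr r₀), rfl⟩
  · obtain ⟨a, -, rfl⟩ := h3
    exact ⟨Sum.inr (Sum.inl a), rfl⟩

lemma constraint_not_kp {M : Set (PExt α)} {a : α}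
    (hs : (strip (⟨∅, {Lit.pos (kpA a), Lit.neg (kaE a)}⟩ : Rule (PExt α))).sat M) :
    kpA a ∉ M := by
  intro hmem
  have hbody : ∀ L ∈ (strip (⟨∅, {Lit.pos (kpA a), Lit.neg (kaE a)}⟩ : Rule (PExt α))).body,
      L.sat M := by
    rintro L ⟨hL, hnn⟩
    simp only [Set.mem_insert_iff, Set.mem_singleton_iff] at hL
    rcases hL with rfl | rfl
    · exact hmem
    · exact absurd trivial hnn
  obtain ⟨b, hb', -⟩ := hs hbody
  exact absurd hb' (Set.notMem_empty b)

/-- Part (a): restriction of a stable model of `G₁` is a stable model of `G₀`. -/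
lemma stable_lp {P : EProgram α} {M' : Set (PExt α)} (hM : isStable (G1 P) M') :
    isStable (G0 P) (lp M') := by
  obtain ⟨hmod, hmin⟩ := hM
  constructor
  · rintro r' ⟨r, hrG0, hc, rfl⟩
    have hmem : strip (r.mapAtoms Sum.inl) ∈ reduct (G1 P) M' :=
      mem_reduct (Or.inl (Or.inl ⟨r, hrG0, rfl⟩)) ((cond_map r M').mpr hc)
    have hsat := hmod _ hmem
    rw [strip_map, sat_mapAtoms] at hsat
    exact hsat
  · intro J hJsub hJmod
    set J' : Set (PExt α) := (Sum.inl '' J) ∪ {x | x ∈ M' ∧ ∃ y, x = Sum.inr y} with hJ'def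
    have hlpJ : lp J' = J := by
      ext x
      simp only [lp, hJ'def, Set.mem_union, Set.mem_image, Set.mem_setOf_eq]
      constructor
      · rintro (⟨a, ha, hax⟩ | ⟨-, y, hxy⟩)
        · exact (Sum.inl.inj hax) ▸ ha
        · exact absurd hxy (by simp)
      · intro hx
        exact Or.inl ⟨x, hx, rfl⟩
    have hJ'sub : J' ⊆ M' := by
      rintro x (⟨a, ha, rfl⟩ | ⟨hx, -⟩)
      · exact hJsub ha
      · exact hx
    have hJ'mod : isModel J' (reduct (G1 P) M') := by
      rintro r' ⟨r, hrG, hc, rfl⟩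
      rcases hrG with (hg | hk) | hcon
      · obtain ⟨r₀, hr₀, rfl⟩ := hg
        show (strip (r₀.mapAtoms Sum.inl)).sat J'
        rw [strip_map, sat_mapAtoms, hlpJ]
        exact hJmod _ ⟨r₀, hr₀, (cond_map r₀ M').mp hc, rfl⟩
      · intro hb
        obtain ⟨a, hah, haM⟩ := hmod _ ⟨r, Or.inl (Or.inr hk), hc, rfl⟩
          (fun L hL => sat_mono hJ'sub hL.2 (hb L hL))
        obtain ⟨y, hy⟩ := kpProg_head_single hk
        rw [hy, Set.mem_singleton_iff] at hah
        subst hah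
        exact ⟨Sum.inr y, by rw [hy]; exact rfl, Or.inr ⟨haM, y, rfl⟩⟩
      · obtain ⟨a, haK, rfl⟩ := hcon
        intro hb
        have h2 : kpA a ∉ M' :=
          constraint_not_kp (hmod _ ⟨_, Or.inr ⟨a, haK, rfl⟩, hc, rfl⟩)
        have h1 : kpA a ∈ J' :=
          hb (Lit.pos (kpA a)) ⟨Set.mem_insert _ _, by simp [Lit.isNeg]⟩
        exact absurd (hJ'sub h1) h2
    have hJM : J' = M' := hmin J' hJ'sub hJ'mod
    calc J = lp J' := hlpJ.symm
    _ = lp M' := by rw [hJM]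

/-- Injectivity: stable models of `G₁` with the same restriction coincide. -/
lemma stable_inj {P : EProgram α} {M₁ M₂ : Set (PExt α)} (h1 : isStable (G1 P) M₁)
    (h2 : isStable (G1 P) M₂) (h : lp M₁ = lp M₂) : M₁ = M₂ := by
  have hred := reduct_G1_eq P h
  have hNmod : isModel (M₁ ∩ M₂) (reduct (G1 P) M₁) := by
    rintro r' ⟨r, hrG, hc, rfl⟩
    have hs1 : (strip r).sat M₁ := h1.1 _ ⟨r, hrG, hc, rfl⟩
    have hs2 : (strip r).sat M₂ := h2.1 _ (hred ▸ (⟨r, hrG, hc, rfl⟩ :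
      strip r ∈ reduct (G1 P) M₁))
    rcases hrG with (hg | hk) | hcon
    · obtain ⟨r₀, hr₀, rfl⟩ := hg
      intro hb
      obtain ⟨a, hah, haM1⟩ := hs1
        (fun L hL => sat_mono Set.inter_subset_left hL.2 (hb L hL))
      obtain ⟨b, hbh, rfl⟩ := hah
      have hbl : b ∈ lp M₁ := haM1
      rw [h] at hbl
      exact ⟨Sum.inl b, ⟨b, hbh, rfl⟩, haM1, hbl⟩
    · intro hb
      obtain ⟨a, hah, haM1⟩ := hs1
        (fun L hL => sat_mono Set.inter_subset_left hL.2 (hb L hL))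
      obtain ⟨a', hah', haM2⟩ := hs2
        (fun L hL => sat_mono Set.inter_subset_right hL.2 (hb L hL))
      obtain ⟨y, hy⟩ := kpProg_head_single hk
      simp only [strip, hy, Set.mem_singleton_iff] at hah hah'
      subst hah
      subst hah'
      exact ⟨Sum.inr y, by show Sum.inr y ∈ r.head; rw [hy]; exact rfl, haM1, haM2⟩
    · obtain ⟨a, haK, rfl⟩ := hcon
      intro hb
      have hnot : kpA a ∉ M₁ := constraint_not_kp hs1
      have hin : kpA a ∈ M₁ ∩ M₂ :=
        hb (Lit.pos (kpA a)) ⟨Set.mem_insert _ _, by simp [Lit.isNeg]⟩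
      exact absurd hin.1 hnot
  have hN1 : M₁ ∩ M₂ = M₁ := h1.2 _ Set.inter_subset_left hNmod
  have hN2 : M₁ ∩ M₂ = M₂ := h2.2 _ Set.inter_subset_right (by rw [← hred]; exact hNmod)
  rw [← hN1, hN2]

lemma stable_subset_heads {Q : Program β} {I : Set β} (h : isStable Q I) :
    I ⊆ {a | ∃ r ∈ Q, a ∈ r.head} := by
  have hmod : isModel (I ∩ {a | ∃ r ∈ Q, a ∈ r.head}) (reduct Q I) := by
    rintro r' ⟨r, hrQ, hc, rfl⟩ hb
    obtain ⟨a, hah, haI⟩ := h.1 _ ⟨r, hrQ, hc, rfl⟩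
      (fun L hL => sat_mono Set.inter_subset_left hL.2 (hb L hL))
    exact ⟨a, hah, haI, r, hrQ, hah⟩
  have heq := h.2 _ Set.inter_subset_left hmod
  intro x hx
  rw [← heq] at hx
  exact hx.2

lemma katoms_finite {P : EProgram α} (hfin : P.Finite)
    (hr : ∀ r ∈ P, r.head.Finite ∧ r.body.Finite) : (KAtoms P).Finite := by
  have hsub : KAtoms P ⊆ ⋃ r ∈ P, ((fun a => SLit.k (Lit.pos a)) ⁻¹' r.body ∪
      (fun a => SLit.nk (Lit.pos a)) ⁻¹' r.body ∪
      (fun a => SLit.nnk (Lit.pos a)) ⁻¹' r.body) := by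
    rintro a ⟨r, hrP, hmem⟩
    refine Set.mem_biUnion hrP ?_
    rcases hmem with hmem | hmem | hmem
    · exact Or.inl (Or.inl hmem)
    · exact Or.inl (Or.inr hmem)
    · exact Or.inr hmem
  refine Set.Finite.subset (Set.Finite.biUnion hfin fun r hrP => ?_) hsub
  have hb := (hr r hrP).2
  refine ((hb.preimage ?_).union (hb.preimage ?_)).union (hb.preimage ?_) <;>
    exact fun x _ y _ hxy => by simpa using hxy

lemma G0_heads_finite {P : EProgram α} (hfin : P.Finite)
    (hr : ∀ r ∈ P, r.head.Finite ∧ r.body.Finite) :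
    {a : α ⊕ α | ∃ r ∈ G0 P, a ∈ r.head}.Finite := by
  have hsub : {a : α ⊕ α | ∃ r ∈ G0 P, a ∈ r.head} ⊆
      (Sum.inl '' ⋃ r ∈ P, r.head) ∪ Sum.inr '' KAtoms P := by
    rintro x ⟨r, hrG, hx⟩
    rcases hrG with (himg | hch) | hcon
    · obtain ⟨r₀, hr₀, rfl⟩ := himg
      obtain ⟨b, hb, rfl⟩ := hx
      exact Or.inl ⟨b, Set.mem_biUnion hr₀ hb, rfl⟩
    · obtain ⟨a, haK, rfl⟩ := hch
      exact Or.inr ⟨a, haK, hx.symm⟩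
    · obtain ⟨a, -, rfl⟩ := hcon
      exact absurd hx (Set.notMem_empty x)
  exact Set.Finite.subset (((hfin.biUnion fun r hrH => (hr r hrH).1).image _).union
    ((katoms_finite hfin hr).image _)) hsub

lemma SM_G0_finite {P : EProgram α} (hfin : P.Finite)
    (hr : ∀ r ∈ P, r.head.Finite ∧ r.body.Finite) : (SM (G0 P)).Finite := by
  refine Set.Finite.subset (G0_heads_finite hfin hr).finite_subsets ?_
  intro I hI
  exact stable_subset_heads hI

end G1G0Proof

/-- every stable model of `G₁(Π)`, restricted to the atoms of
`G₀(Π)`, is a stable model of `G₀(Π)`; consequently `G₁(Π)` has at most as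
many stable models as `G₀(Π)`. -/
theorem G1_at_most_G0 {α : Type} (P : EProgram α) (hfin : P.Finite)
    (hr : ∀ r ∈ P, r.head.Finite ∧ r.body.Finite) (hnf : isNormalForm P) :
    (∀ M' ∈ SM (G1 P), { x : α ⊕ α | Sum.inl x ∈ M' } ∈ SM (G0 P))
    ∧ (SM (G1 P)).ncard ≤ (SM (G0 P)).ncard := by
  have hpart1 : ∀ M' ∈ SM (G1 P), { x : α ⊕ α | Sum.inl x ∈ M' } ∈ SM (G0 P) :=
    fun M' hM' => G1G0Proof.stable_lp hM'
  refine ⟨hpart1, ?_⟩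
  exact Set.ncard_le_ncard_of_injOn (fun M' => { x : α ⊕ α | Sum.inl x ∈ M' }) hpart1
    (fun M₁ h₁ M₂ h₂ hEq => G1G0Proof.stable_inj h₁ h₂ hEq)
    (G1G0Proof.SM_G0_finite hfin hr)
end

section
/- There exists a family of epistemic programs Π₁, Π₂, ... with size of Πₙ in O(n) such that G₀(Πₙ) has at least 2ⁿ stable models while G₁(Πₙ) has exactly one stable model; in particular 2ⁿ · |SM(G₁(Πₙ))| ≤ |SM(G₀(Πₙ))|. -/
/-- A fixed countable signature: atoms `aᵢ` (`Sum.inl (Sum.inl i)`),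
`n_aᵢ` (`Sum.inl (Sum.inr i)`) and `g` (`Sum.inr ()`). -/
abbrev A19 : Type := (ℕ ⊕ ℕ) ⊕ Unit
/-! ### Auxiliary development -/

open Set

section General
variable {α : Type}

lemma lit_sat_mono {J M : Set α} (h : J ⊆ M) {L : Lit α} (hL : ¬ L.isNeg) :
    L.sat J → L.sat M := by
  cases L <;> simp_all [Lit.sat, Lit.isNeg]
  exact fun h' => h h'

lemma reduct_mem {P : Program α} {I : Set α} {r' : Rule α} :
    r' ∈ reduct P I ↔ ∃ r ∈ P, (∀ L ∈ r.body, L.isNeg → L.sat I) ∧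
      r' = ⟨r.head, {L | L ∈ r.body ∧ ¬ L.isNeg}⟩ := Iff.rfl

/-- atoms in heads of a program -/
def headAtoms (P : Program α) : Set α := ⋃ r ∈ P, r.head

lemma stable_subset_headAtoms {P : Program α} {M : Set α} (h : isStable P M) :
    M ⊆ headAtoms P := by
  have hmod : isModel (M ∩ headAtoms P) (reduct P M) := by
    intro r' hr'
    obtain ⟨r, hrP, hneg, rfl⟩ := hr'
    intro hbody
    have hb : ∀ L ∈ ({L | L ∈ r.body ∧ ¬ L.isNeg} : Set (Lit α)), L.sat M := by
      intro L hL
      exact lit_sat_mono inter_subset_left hL.2 (hbody L hL)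
    obtain ⟨a, ha, haM⟩ := h.1 _ (reduct_mem.2 ⟨r, hrP, hneg, rfl⟩) hb
    exact ⟨a, ha, haM, mem_biUnion hrP ha⟩
  have heq := h.2 _ inter_subset_left hmod
  intro x hx
  have hx' : x ∈ M ∩ headAtoms P := by rw [heq]; exact hx
  exact hx'.2

lemma SM_finite {P : Program α} (h : (headAtoms P).Finite) : (SM P).Finite := by
  have : SM P ⊆ {M | M ⊆ headAtoms P} := fun M hM => stable_subset_headAtoms hM
  exact Finite.subset (Finite.finite_subsets h) this

end General

section Family

/-- atom `aᵢ` -/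
def aA (i : ℕ) : A19 := Sum.inl (Sum.inl i)
/-- atom `n_aᵢ` -/
def nA (i : ℕ) : A19 := Sum.inl (Sum.inr i)
/-- atom `g` -/
def gA : A19 := Sum.inr ()

/-- rule `aᵢ ← ¬K n_aᵢ` -/
def R1 (i : ℕ) : ERule A19 := ⟨{aA i}, {SLit.nk (Lit.pos (nA i))}⟩
/-- rule `n_aᵢ ← ¬aᵢ` -/
def R2 (i : ℕ) : ERule A19 := ⟨{nA i}, {SLit.obj (Lit.neg (aA i))}⟩
/-- rule `g ← aᵢ` -/
def R3 (i : ℕ) : ERule A19 := ⟨{gA}, {SLit.obj (Lit.pos (aA i))}⟩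
/-- rule `⊥ ← K g` -/
def R4 : ERule A19 := ⟨∅, {SLit.k (Lit.pos gA)}⟩

/-- the program `Πₙ` -/
def Pifam (n : ℕ) : EProgram A19 :=
  (R1 '' Set.Iio n) ∪ (R2 '' Set.Iio n) ∪ (R3 '' Set.Iio n) ∪ {R4}

lemma aA_inj : Function.Injective aA := by intro i j h; simpa [aA] using h
lemma nA_inj : Function.Injective nA := by intro i j h; simpa [nA] using h
lemma aA_ne_nA (i j : ℕ) : aA i ≠ nA j := by simp [aA, nA]
lemma aA_ne_gA (i : ℕ) : aA i ≠ gA := by simp [aA, gA]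
lemma nA_ne_gA (i : ℕ) : nA i ≠ gA := by simp [nA, gA]

lemma Pifam_ncard (n : ℕ) : (Pifam n).ncard ≤ 3 * n + 3 := by
  have hIio : (Set.Iio n : Set ℕ).ncard = n := by
    rw [show (Set.Iio n : Set ℕ) = ↑(Finset.Iio n) by simp, Set.ncard_coe_finset]
    simp
  have hfin : (Set.Iio n : Set ℕ).Finite := Set.finite_Iio n
  calc (Pifam n).ncard ≤ ((R1 '' Set.Iio n) ∪ (R2 '' Set.Iio n) ∪ (R3 '' Set.Iio n)).ncard
        + ({R4} : Set (ERule A19)).ncard := Set.ncard_union_le _ _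
    _ ≤ ((R1 '' Set.Iio n) ∪ (R2 '' Set.Iio n)).ncard + (R3 '' Set.Iio n).ncard + 1 := by
        have := Set.ncard_union_le ((R1 '' Set.Iio n) ∪ (R2 '' Set.Iio n)) (R3 '' Set.Iio n)
        simp only [Set.ncard_singleton]
        omega
    _ ≤ (R1 '' Set.Iio n).ncard + (R2 '' Set.Iio n).ncard + (R3 '' Set.Iio n).ncard + 1 := by
        have := Set.ncard_union_le (R1 '' Set.Iio n) (R2 '' Set.Iio n)
        omega
    _ ≤ n + n + n + 1 := by
        have h1 := Set.ncard_image_le (f := R1) hfin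
        have h2 := Set.ncard_image_le (f := R2) hfin
        have h3 := Set.ncard_image_le (f := R3) hfin
        omega
    _ ≤ 3 * n + 3 := by omega

lemma mem_Pifam {n : ℕ} {r : ERule A19} :
    r ∈ Pifam n ↔ (∃ i < n, r = R1 i) ∨ (∃ i < n, r = R2 i) ∨ (∃ i < n, r = R3 i) ∨ r = R4 := by
  simp only [Pifam, Set.mem_union, Set.mem_image, Set.mem_Iio, Set.mem_singleton_iff]
  constructor
  · rintro (((⟨i,hi,rfl⟩|⟨i,hi,rfl⟩)|⟨i,hi,rfl⟩)|rfl) <;> aesop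
  · rintro (⟨i,hi,rfl⟩|⟨i,hi,rfl⟩|⟨i,hi,rfl⟩|rfl) <;> aesop

lemma KAtoms_Pifam (n : ℕ) : KAtoms (Pifam n) = nA '' Set.Iio n ∪ {gA} := by
  ext x
  simp only [KAtoms, Set.mem_setOf_eq, Set.mem_union, Set.mem_image, Set.mem_Iio,
    Set.mem_singleton_iff]
  constructor
  · rintro ⟨r, hr, h⟩
    rcases mem_Pifam.1 hr with ⟨i, hi, rfl⟩ | ⟨i, hi, rfl⟩ | ⟨i, hi, rfl⟩ | rfl <;>
      simp [R1, R2, R3, R4] at h <;> aesop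
  · rintro (⟨i, hi, rfl⟩ | rfl)
    · exact ⟨R1 i, mem_Pifam.2 (Or.inl ⟨i, hi, rfl⟩), Or.inr (Or.inl (by simp [R1]))⟩
    · exact ⟨R4, mem_Pifam.2 (Or.inr (Or.inr (Or.inr rfl))), Or.inl (by simp [R4])⟩

lemma AtE_Pifam (n : ℕ) : AtE (Pifam n) = aA '' Set.Iio n ∪ nA '' Set.Iio n ∪ {gA} := by
  ext x
  simp only [AtE, Set.mem_setOf_eq, Set.mem_union, Set.mem_image, Set.mem_Iio,
    Set.mem_singleton_iff]
  constructor
  · rintro ⟨r, hr, h⟩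
    rcases mem_Pifam.1 hr with ⟨i, hi, rfl⟩ | ⟨i, hi, rfl⟩ | ⟨i, hi, rfl⟩ | rfl <;>
      simp [R1, R2, R3, R4, SLit.atoms, Lit.atoms] at h <;> aesop
  · rintro ((⟨i, hi, rfl⟩ | ⟨i, hi, rfl⟩) | rfl)
    · exact ⟨R1 i, mem_Pifam.2 (Or.inl ⟨i, hi, rfl⟩), Or.inl (by simp [R1])⟩
    · exact ⟨R2 i, mem_Pifam.2 (Or.inr (Or.inl ⟨i, hi, rfl⟩)), Or.inl (by simp [R2])⟩
    · exact ⟨R4, mem_Pifam.2 (Or.inr (Or.inr (Or.inr rfl))),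
        Or.inr ⟨SLit.k (Lit.pos gA), by simp [R4], by simp [SLit.atoms, Lit.atoms]⟩⟩

end Family

section G0part

/-- `aᵢ ← ¬ka_{n_aᵢ}` in `G0` -/
def g1r (i : ℕ) : Rule (A19 ⊕ A19) := ⟨{Sum.inl (aA i)}, {Lit.neg (Sum.inr (nA i))}⟩
def g2r (i : ℕ) : Rule (A19 ⊕ A19) := ⟨{Sum.inl (nA i)}, {Lit.neg (Sum.inl (aA i))}⟩
def g3r (i : ℕ) : Rule (A19 ⊕ A19) := ⟨{Sum.inl gA}, {Lit.pos (Sum.inl (aA i))}⟩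
def g4r : Rule (A19 ⊕ A19) := ⟨∅, {Lit.pos (Sum.inr gA)}⟩
/-- choice rule -/
def chr (x : A19) : Rule (A19 ⊕ A19) := ⟨{Sum.inr x}, {Lit.nneg (Sum.inr x)}⟩
/-- consistency constraint -/
def cnr (x : A19) : Rule (A19 ⊕ A19) := ⟨∅, {Lit.pos (Sum.inr x), Lit.neg (Sum.inl x)}⟩

/-- the objective translation of rules -/
def trR (r : ERule A19) : Rule (A19 ⊕ A19) := ⟨Sum.inl '' r.head, SLit.t0 '' r.body⟩

lemma trR_R1 (i : ℕ) : trR (R1 i) = g1r i := by simp [trR, R1, g1r, SLit.t0]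
lemma trR_R2 (i : ℕ) : trR (R2 i) = g2r i := by simp [trR, R2, g2r, SLit.t0, Lit.map]
lemma trR_R3 (i : ℕ) : trR (R3 i) = g3r i := by simp [trR, R3, g3r, SLit.t0, Lit.map]
lemma trR_R4 : trR R4 = g4r := by simp [trR, R4, g4r, SLit.t0]

lemma mem_G0 {n : ℕ} {r : Rule (A19 ⊕ A19)} :
    r ∈ G0 (Pifam n) ↔
      (∃ i < n, r = g1r i) ∨ (∃ i < n, r = g2r i) ∨ (∃ i < n, r = g3r i) ∨ r = g4r
      ∨ (∃ i < n, r = chr (nA i)) ∨ r = chr gA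
      ∨ (∃ i < n, r = cnr (nA i)) ∨ r = cnr gA := by
  have himg : (fun r : ERule A19 => (⟨Sum.inl '' r.head, SLit.t0 '' r.body⟩ :
      Rule (A19 ⊕ A19))) = trR := rfl
  simp only [G0, T0, KAtoms_Pifam, himg]
  simp only [Pifam, Set.image_union, Set.image_singleton, Set.image_image,
    Set.mem_union, Set.mem_image, Set.mem_Iio, Set.mem_singleton_iff]
  constructor
  · rintro ((((((⟨i,hi,rfl⟩|⟨i,hi,rfl⟩)|⟨i,hi,rfl⟩)|rfl)|(⟨i,hi,rfl⟩|rfl))|(⟨i,hi,rfl⟩|rfl)))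
    · exact Or.inl ⟨i, hi, trR_R1 i⟩
    · exact Or.inr (Or.inl ⟨i, hi, trR_R2 i⟩)
    · exact Or.inr (Or.inr (Or.inl ⟨i, hi, trR_R3 i⟩))
    · exact Or.inr (Or.inr (Or.inr (Or.inl trR_R4)))
    · exact Or.inr (Or.inr (Or.inr (Or.inr (Or.inl ⟨i, hi, rfl⟩))))
    · exact Or.inr (Or.inr (Or.inr (Or.inr (Or.inr (Or.inl rfl)))))
    · exact Or.inr (Or.inr (Or.inr (Or.inr (Or.inr (Or.inr (Or.inl ⟨i, hi, rfl⟩))))))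
    · exact Or.inr (Or.inr (Or.inr (Or.inr (Or.inr (Or.inr (Or.inr rfl))))))
  · rintro (⟨i,hi,rfl⟩|⟨i,hi,rfl⟩|⟨i,hi,rfl⟩|rfl|⟨i,hi,rfl⟩|rfl|⟨i,hi,rfl⟩|rfl)
    · exact Or.inl (Or.inl (Or.inl (Or.inl (Or.inl ⟨i, hi, trR_R1 i⟩))))
    · exact Or.inl (Or.inl (Or.inl (Or.inl (Or.inr ⟨i, hi, trR_R2 i⟩))))
    · exact Or.inl (Or.inl (Or.inl (Or.inr ⟨i, hi, trR_R3 i⟩)))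
    · exact Or.inl (Or.inl (Or.inr trR_R4.symm))
    · exact Or.inl (Or.inr (Or.inl ⟨i, hi, rfl⟩))
    · exact Or.inl (Or.inr (Or.inr rfl))
    · exact Or.inr (Or.inl ⟨i, hi, rfl⟩)
    · exact Or.inr (Or.inr rfl)

end G0part

section MSstable

lemma mem_reduct_of {α : Type} {P : Program α} {I : Set α} {r : Rule α} (hr : r ∈ P)
    (hneg : ∀ L ∈ r.body, L.isNeg → L.sat I) :
    (⟨r.head, {L | L ∈ r.body ∧ ¬ L.isNeg}⟩ : Rule α) ∈ reduct P I := ⟨r, hr, hneg, rfl⟩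

/-- candidate stable model of `G0 (Pifam n)` for `S ⊆ {0,…,n-1}` -/
def MS (n : ℕ) (S : Set ℕ) : Set (A19 ⊕ A19) :=
  {x | (∃ i, i ∈ S ∧ i < n ∧ x = Sum.inl (aA i)) ∨
       (∃ i, i ∉ S ∧ i < n ∧ (x = Sum.inl (nA i) ∨ x = Sum.inr (nA i))) ∨
       (x = Sum.inl gA ∧ ∃ i, i ∈ S ∧ i < n)}

variable {n : ℕ} {S : Set ℕ}

lemma MS_inl_aA {j : ℕ} : Sum.inl (aA j) ∈ MS n S ↔ j ∈ S ∧ j < n := by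
  simp [MS, aA, nA, gA]
lemma MS_inl_nA {j : ℕ} : Sum.inl (nA j) ∈ MS n S ↔ j ∉ S ∧ j < n := by
  simp [MS, aA, nA, gA]
lemma MS_inr_nA {j : ℕ} : Sum.inr (nA j) ∈ MS n S ↔ j ∉ S ∧ j < n := by
  simp [MS, aA, nA, gA]
lemma MS_inl_gA : Sum.inl gA ∈ MS n S ↔ ∃ i, i ∈ S ∧ i < n := by
  simp [MS, aA, nA, gA]
lemma MS_inr_gA : Sum.inr gA ∉ MS n S := by
  simp [MS, aA, nA, gA]

lemma MS_stable (n : ℕ) (S : Set ℕ) : isStable (G0 (Pifam n)) (MS n S) := by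
  constructor
  · -- model of the reduct
    rintro r' ⟨r, hrG0, hneg, rfl⟩
    rcases mem_G0.1 hrG0 with ⟨i,hi,rfl⟩|⟨i,hi,rfl⟩|⟨i,hi,rfl⟩|rfl|⟨i,hi,rfl⟩|rfl|⟨i,hi,rfl⟩|rfl
    · -- g1r i : aᵢ ← ¬ka_{nᵢ}
      intro _
      have h1 : (Lit.neg (Sum.inr (nA i))).sat (MS n S) :=
        hneg _ (by simp [g1r]) (by simp [Lit.isNeg])
      simp only [Lit.sat, MS_inr_nA] at h1
      have hiS : i ∈ S := by by_contra h; exact h1 ⟨h, hi⟩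
      exact ⟨Sum.inl (aA i), by simp [g1r], MS_inl_aA.2 ⟨hiS, hi⟩⟩
    · -- g2r i : nᵢ ← ¬aᵢ
      intro _
      have h1 : (Lit.neg (Sum.inl (aA i))).sat (MS n S) :=
        hneg _ (by simp [g2r]) (by simp [Lit.isNeg])
      simp only [Lit.sat, MS_inl_aA] at h1
      have hiS : i ∉ S := fun h => h1 ⟨h, hi⟩
      exact ⟨Sum.inl (nA i), by simp [g2r], MS_inl_nA.2 ⟨hiS, hi⟩⟩
    · -- g3r i : g ← aᵢ
      intro hb
      have h1 : (Lit.pos (Sum.inl (aA i))).sat (MS n S) :=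
        hb _ (by simp [g3r, Lit.isNeg])
      simp only [Lit.sat, MS_inl_aA] at h1
      exact ⟨Sum.inl gA, by simp [g3r], MS_inl_gA.2 ⟨i, h1.1, h1.2⟩⟩
    · -- g4r : ⊥ ← kg
      intro hb
      have h1 : (Lit.pos (Sum.inr gA)).sat (MS n S) :=
        hb _ (by simp [g4r, Lit.isNeg])
      exact absurd h1 MS_inr_gA
    · -- chr (nA i)
      intro _
      have h1 : (Lit.nneg (Sum.inr (nA i))).sat (MS n S) :=
        hneg _ (by simp [chr]) (by simp [Lit.isNeg])
      exact ⟨Sum.inr (nA i), by simp [chr], h1⟩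
    · -- chr gA
      intro _
      have h1 : (Lit.nneg (Sum.inr gA)).sat (MS n S) :=
        hneg _ (by simp [chr]) (by simp [Lit.isNeg])
      exact absurd h1 MS_inr_gA
    · -- cnr (nA i)
      intro hb
      have h1 : (Lit.pos (Sum.inr (nA i))).sat (MS n S) :=
        hb _ (by simp [cnr, Lit.isNeg])
      have h2 : (Lit.neg (Sum.inl (nA i))).sat (MS n S) :=
        hneg _ (by simp [cnr]) (by simp [Lit.isNeg])
      simp only [Lit.sat, MS_inr_nA, MS_inl_nA] at h1 h2
      exact absurd h1 h2
    · -- cnr gA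
      intro hb
      have h1 : (Lit.pos (Sum.inr gA)).sat (MS n S) :=
        hb _ (by simp [cnr, Lit.isNeg])
      exact absurd h1 MS_inr_gA
  · -- minimality
    intro J hJ hJmod
    have haA : ∀ i, i ∈ S → i < n → Sum.inl (aA i) ∈ J := by
      intro i hiS hin
      have hmem := mem_reduct_of (P := G0 (Pifam n)) (I := MS n S)
        (mem_G0.2 (Or.inl ⟨i, hin, rfl⟩))
        (by
          rintro L hL hneg
          simp only [g1r, Set.mem_singleton_iff] at hL
          subst hL
          simp only [Lit.sat, MS_inr_nA]
          exact fun h => h.1 hiS)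
      have hsat := hJmod _ hmem (by
        rintro L ⟨hL1, hL2⟩
        simp only [g1r, Set.mem_singleton_iff] at hL1
        subst hL1
        exact absurd trivial hL2)
      simpa [g1r] using hsat
    have hnA : ∀ i, i ∉ S → i < n → Sum.inl (nA i) ∈ J := by
      intro i hiS hin
      have hmem := mem_reduct_of (P := G0 (Pifam n)) (I := MS n S)
        (mem_G0.2 (Or.inr (Or.inl ⟨i, hin, rfl⟩)))
        (by
          rintro L hL hneg
          simp only [g2r, Set.mem_singleton_iff] at hL
          subst hL
          simp only [Lit.sat, MS_inl_aA]
          exact fun h => hiS h.1)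
      have hsat := hJmod _ hmem (by
        rintro L ⟨hL1, hL2⟩
        simp only [g2r, Set.mem_singleton_iff] at hL1
        subst hL1
        exact absurd trivial hL2)
      simpa [g2r] using hsat
    have hknA : ∀ i, i ∉ S → i < n → Sum.inr (nA i) ∈ J := by
      intro i hiS hin
      have hmem := mem_reduct_of (P := G0 (Pifam n)) (I := MS n S)
        (mem_G0.2 (Or.inr (Or.inr (Or.inr (Or.inr (Or.inl ⟨i, hin, rfl⟩))))))
        (by
          rintro L hL hneg
          simp only [chr, Set.mem_singleton_iff] at hL
          subst hL
          simp only [Lit.sat, MS_inr_nA]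
          exact ⟨hiS, hin⟩)
      have hsat := hJmod _ hmem (by
        rintro L ⟨hL1, hL2⟩
        simp only [chr, Set.mem_singleton_iff] at hL1
        subst hL1
        exact absurd trivial hL2)
      simpa [chr] using hsat
    have hgA : ∀ i, i ∈ S → i < n → Sum.inl gA ∈ J := by
      intro i hiS hin
      have hmem := mem_reduct_of (P := G0 (Pifam n)) (I := MS n S)
        (mem_G0.2 (Or.inr (Or.inr (Or.inl ⟨i, hin, rfl⟩))))
        (by
          rintro L hL hneg
          simp only [g3r, Set.mem_singleton_iff] at hL
          subst hL
          exact absurd hneg (by simp [Lit.isNeg]))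
      have hsat := hJmod _ hmem (by
        rintro L ⟨hL1, hL2⟩
        simp only [g3r, Set.mem_singleton_iff] at hL1
        subst hL1
        simpa [Lit.sat] using haA i hiS hin)
      simpa [g3r] using hsat
    have hsub : MS n S ⊆ J := by
      rintro x (⟨i, hiS, hin, rfl⟩ | ⟨i, hiS, hin, rfl | rfl⟩ | ⟨rfl, i, hiS, hin⟩)
      · exact haA i hiS hin
      · exact hnA i hiS hin
      · exact hknA i hiS hin
      · exact hgA i hiS hin
    exact Set.Subset.antisymm hJ hsub

end MSstable

section G0count

lemma G0_headAtoms_finite (n : ℕ) : (headAtoms (G0 (Pifam n))).Finite := by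
  have hsub : headAtoms (G0 (Pifam n)) ⊆
      (Sum.inl '' (aA '' Set.Iio n ∪ nA '' Set.Iio n ∪ {gA})) ∪
      (Sum.inr '' (nA '' Set.Iio n ∪ {gA})) := by
    intro x hx
    obtain ⟨r, hr, hxr⟩ : ∃ r ∈ G0 (Pifam n), x ∈ r.head := by simpa [headAtoms] using hx
    rcases mem_G0.1 hr with ⟨i,hi,rfl⟩|⟨i,hi,rfl⟩|⟨i,hi,rfl⟩|rfl|⟨i,hi,rfl⟩|rfl|⟨i,hi,rfl⟩|rfl <;>
      simp only [g1r, g2r, g3r, g4r, chr, cnr, Set.mem_singleton_iff, Set.mem_empty_iff_false]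
        at hxr <;> first
      | exact absurd hxr (by simp)
      | (subst hxr; aesop)
  exact Set.Finite.subset (by
    refine Set.Finite.union (Set.Finite.image _ ?_) (Set.Finite.image _ ?_) <;>
      refine Set.Finite.union ?_ (Set.finite_singleton _) <;>
      first
      | exact Set.Finite.union (Set.Finite.image _ (Set.finite_Iio n))
          (Set.Finite.image _ (Set.finite_Iio n))
      | exact Set.Finite.image _ (Set.finite_Iio n)) hsub

lemma G0_SM_finite (n : ℕ) : (SM (G0 (Pifam n))).Finite :=
  SM_finite (G0_headAtoms_finite n)

lemma G0_count (n : ℕ) : 2 ^ n ≤ (SM (G0 (Pifam n))).ncard := by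
  classical
  set f : Finset ℕ → Set (A19 ⊕ A19) := fun t => MS n ↑t with hf
  have hinj : Set.InjOn f ↑((Finset.range n).powerset) := by
    intro t ht t' ht' heq
    simp only [Finset.coe_powerset, Set.mem_preimage, Set.mem_powerset_iff,
      Finset.coe_subset, Finset.coe_range] at ht ht'
    ext i
    constructor
    · intro hit
      have hin : i < n := by
        have := ht hit
        simpa using this
      have h1 : Sum.inl (aA i) ∈ MS n ↑t := MS_inl_aA.2 ⟨by simpa using hit, hin⟩
      rw [show MS n ↑t = MS n ↑t' from heq] at h1
      simpa using (MS_inl_aA.1 h1).1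
    · intro hit
      have hin : i < n := by
        have := ht' hit
        simpa using this
      have h1 : Sum.inl (aA i) ∈ MS n ↑t' := MS_inl_aA.2 ⟨by simpa using hit, hin⟩
      rw [show MS n ↑t' = MS n ↑t from heq.symm] at h1
      simpa using (MS_inl_aA.1 h1).1
  have hsubset : f '' ↑((Finset.range n).powerset) ⊆ SM (G0 (Pifam n)) := by
    rintro _ ⟨t, _, rfl⟩
    exact MS_stable n ↑t
  calc (2 : ℕ) ^ n = ((Finset.range n).powerset).card := by
        simp [Finset.card_powerset]
    _ = (↑((Finset.range n).powerset) : Set (Finset ℕ)).ncard := by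
        rw [Set.ncard_coe_finset]
    _ = (f '' ↑((Finset.range n).powerset)).ncard :=
        (Set.ncard_image_of_injOn hinj).symm
    _ ≤ (SM (G0 (Pifam n))).ncard :=
        Set.ncard_le_ncard hsubset (G0_SM_finite n)

end G0count

section G1part

/-! Explicit rules of `G1 (Pifam n)`. -/

def m1r (i : ℕ) : Rule (PExt A19) := ⟨{aE (aA i)}, {Lit.neg (kaE (nA i))}⟩
def m2r (i : ℕ) : Rule (PExt A19) := ⟨{aE (nA i)}, {Lit.neg (aE (aA i))}⟩
def m3r (i : ℕ) : Rule (PExt A19) := ⟨{aE gA}, {Lit.pos (aE (aA i))}⟩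
def m4r : Rule (PExt A19) := ⟨∅, {Lit.pos (kaE gA)}⟩
def mchr (x : A19) : Rule (PExt A19) := ⟨{kaE x}, {Lit.nneg (kaE x)}⟩
def mcnr (x : A19) : Rule (PExt A19) := ⟨∅, {Lit.pos (kaE x), Lit.neg (aE x)}⟩
def p1r (i : ℕ) : Rule (PExt A19) := ⟨{kpA (aA i)}, {Lit.neg (kaE (nA i))}⟩
def p2r (i : ℕ) : Rule (PExt A19) := ⟨{kpA (nA i)}, {Lit.pos (knA (aA i))}⟩
def p3r (i : ℕ) : Rule (PExt A19) := ⟨{kpA gA}, {Lit.pos (kpA (aA i))}⟩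
def n1r (i : ℕ) : Rule (PExt A19) := ⟨{knR (R1 i)}, {Lit.pos (kaE (nA i))}⟩
def n2r (i : ℕ) : Rule (PExt A19) := ⟨{knR (R2 i)}, {Lit.pos (kpA (aA i))}⟩
def n3r (i : ℕ) : Rule (PExt A19) := ⟨{knR (R3 i)}, {Lit.pos (knA (aA i))}⟩
def n4r : Rule (PExt A19) := ⟨{knR R4}, {Lit.neg (kaE gA)}⟩
def caR (i : ℕ) : Rule (PExt A19) := ⟨{knA (aA i)}, {Lit.pos (knR (R1 i))}⟩
def cnaR (i : ℕ) : Rule (PExt A19) := ⟨{knA (nA i)}, {Lit.pos (knR (R2 i))}⟩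
def cgR (n : ℕ) : Rule (PExt A19) :=
  ⟨{knA gA}, (fun i => Lit.pos (knR (R3 i))) '' Set.Iio n⟩
def ccr (x : A19) : Rule (PExt A19) := ⟨∅, {Lit.pos (kpA x), Lit.neg (kaE x)}⟩

/-! Distinctness of the `Πₙ` rules. -/

lemma R1_eq_R1 {i j : ℕ} : R1 i = R1 j ↔ i = j := by
  constructor
  · intro h
    have := congrArg ERule.head h
    simp only [R1, Set.singleton_eq_singleton_iff] at this
    exact aA_inj this
  · rintro rfl; rfl
lemma R2_eq_R2 {i j : ℕ} : R2 i = R2 j ↔ i = j := by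
  constructor
  · intro h
    have := congrArg ERule.head h
    simp only [R2, Set.singleton_eq_singleton_iff] at this
    exact nA_inj this
  · rintro rfl; rfl
lemma R3_eq_R3 {i j : ℕ} : R3 i = R3 j ↔ i = j := by
  constructor
  · intro h
    have := congrArg ERule.body h
    simp only [R3, Set.singleton_eq_singleton_iff] at this
    have : aA i = aA j := by
      injection (by injection this)
    exact aA_inj this
  · rintro rfl; rfl
lemma R1_ne_R2 (i j : ℕ) : R1 i ≠ R2 j := by
  intro h
  have := congrArg ERule.head h
  simp only [R1, R2, Set.singleton_eq_singleton_iff] at this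
  exact aA_ne_nA i j this
lemma R1_ne_R3 (i j : ℕ) : R1 i ≠ R3 j := by
  intro h
  have := congrArg ERule.head h
  simp only [R1, R3, Set.singleton_eq_singleton_iff] at this
  exact aA_ne_gA i this
lemma R2_ne_R3 (i j : ℕ) : R2 i ≠ R3 j := by
  intro h
  have := congrArg ERule.head h
  simp only [R2, R3, Set.singleton_eq_singleton_iff] at this
  exact nA_ne_gA i this
lemma R1_ne_R4 (i : ℕ) : R1 i ≠ R4 := by
  intro h
  have := congrArg ERule.head h
  simp only [R1, R4] at this
  exact absurd (this ▸ rfl : aA i ∈ (∅ : Set A19)) (Set.notMem_empty _)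
lemma R2_ne_R4 (i : ℕ) : R2 i ≠ R4 := by
  intro h
  have := congrArg ERule.head h
  simp only [R2, R4] at this
  exact absurd (this ▸ rfl : nA i ∈ (∅ : Set A19)) (Set.notMem_empty _)
lemma R3_ne_R4 (i : ℕ) : R3 i ≠ R4 := by
  intro h
  have := congrArg ERule.head h
  simp only [R3, R4] at this
  exact absurd (this ▸ rfl : gA ∈ (∅ : Set A19)) (Set.notMem_empty _)

/-! Head-filter computations. -/

lemma filter_head_aA {n i : ℕ} (hi : i < n) :
    {r ∈ Pifam n | aA i ∈ r.head} = {R1 i} := by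
  ext r
  simp only [Set.mem_setOf_eq, Set.mem_singleton_iff]
  constructor
  · rintro ⟨hr, hh⟩
    rcases mem_Pifam.1 hr with ⟨j,hj,rfl⟩|⟨j,hj,rfl⟩|⟨j,hj,rfl⟩|rfl <;>
      simp only [R1, R2, R3, R4, Set.mem_singleton_iff, Set.mem_empty_iff_false] at hh
    · rw [aA_inj hh]
    · exact absurd hh (aA_ne_nA i j)
    · exact absurd hh (aA_ne_gA i)
  · rintro rfl
    exact ⟨mem_Pifam.2 (Or.inl ⟨i, hi, rfl⟩), by simp [R1]⟩

lemma filter_head_nA {n i : ℕ} (hi : i < n) :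
    {r ∈ Pifam n | nA i ∈ r.head} = {R2 i} := by
  ext r
  simp only [Set.mem_setOf_eq, Set.mem_singleton_iff]
  constructor
  · rintro ⟨hr, hh⟩
    rcases mem_Pifam.1 hr with ⟨j,hj,rfl⟩|⟨j,hj,rfl⟩|⟨j,hj,rfl⟩|rfl <;>
      simp only [R1, R2, R3, R4, Set.mem_singleton_iff, Set.mem_empty_iff_false] at hh
    · exact absurd hh.symm (aA_ne_nA j i)
    · rw [nA_inj hh]
    · exact absurd hh (nA_ne_gA i)
  · rintro rfl
    exact ⟨mem_Pifam.2 (Or.inr (Or.inl ⟨i, hi, rfl⟩)), by simp [R2]⟩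

lemma filter_head_gA {n : ℕ} :
    {r ∈ Pifam n | gA ∈ r.head} = R3 '' Set.Iio n := by
  ext r
  simp only [Set.mem_setOf_eq, Set.mem_image, Set.mem_Iio]
  constructor
  · rintro ⟨hr, hh⟩
    rcases mem_Pifam.1 hr with ⟨j,hj,rfl⟩|⟨j,hj,rfl⟩|⟨j,hj,rfl⟩|rfl <;>
      simp only [R1, R2, R3, R4, Set.mem_singleton_iff, Set.mem_empty_iff_false] at hh
    · exact absurd hh.symm (aA_ne_gA j)
    · exact absurd hh.symm (nA_ne_gA j)
    · exact ⟨j, hj, rfl⟩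
  · rintro ⟨j, hj, rfl⟩
    exact ⟨mem_Pifam.2 (Or.inr (Or.inr (Or.inl ⟨j, hj, rfl⟩))), by simp [R3]⟩

end G1part

section G1mem

lemma map_g1r (i : ℕ) : Rule.mapAtoms Sum.inl (g1r i) = m1r i := by
  simp [Rule.mapAtoms, g1r, m1r, aE, kaE, Lit.map]
lemma map_g2r (i : ℕ) : Rule.mapAtoms Sum.inl (g2r i) = m2r i := by
  simp [Rule.mapAtoms, g2r, m2r, aE, kaE, Lit.map]
lemma map_g3r (i : ℕ) : Rule.mapAtoms Sum.inl (g3r i) = m3r i := by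
  simp [Rule.mapAtoms, g3r, m3r, aE, kaE, Lit.map]
lemma map_g4r : Rule.mapAtoms Sum.inl g4r = m4r := by
  simp [Rule.mapAtoms, g4r, m4r, aE, kaE, Lit.map]
lemma map_chr (x : A19) : Rule.mapAtoms Sum.inl (chr x) = mchr x := by
  simp [Rule.mapAtoms, chr, mchr, aE, kaE, Lit.map]
lemma map_cnr (x : A19) : Rule.mapAtoms Sum.inl (cnr x) = mcnr x := by
  simp only [Rule.mapAtoms, cnr, mcnr, aE, kaE, Set.image_singleton, Set.image_empty,
    Set.image_insert_eq, Lit.map]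

lemma mem_kpProg {n : ℕ} {r : Rule (PExt A19)} :
    r ∈ kpProg (Pifam n) ↔
      (∃ i < n, r = p1r i) ∨ (∃ i < n, r = p2r i) ∨ (∃ i < n, r = p3r i) ∨
      (∃ i < n, r = n1r i) ∨ (∃ i < n, r = n2r i) ∨ (∃ i < n, r = n3r i) ∨ r = n4r ∨
      (∃ i < n, r = caR i) ∨ (∃ i < n, r = cnaR i) ∨ r = cgR n := by
  constructor
  · rintro ((⟨rr, hrr, a, hhead, rfl⟩ | ⟨rr, hrr, L, hL, rfl⟩) | ⟨a, haAtE, rfl⟩)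
    · rcases mem_Pifam.1 hrr with ⟨i,hi,rfl⟩|⟨i,hi,rfl⟩|⟨i,hi,rfl⟩|rfl
      · have ha := (Set.singleton_eq_singleton_iff.1 hhead.symm).symm
        subst ha
        exact Or.inl ⟨i, hi, by simp [p1r, R1, SLit.kpBody]⟩
      · have ha := (Set.singleton_eq_singleton_iff.1 hhead.symm).symm
        subst ha
        exact Or.inr (Or.inl ⟨i, hi, by simp [p2r, R2, SLit.kpBody]⟩)
      · have ha := (Set.singleton_eq_singleton_iff.1 hhead.symm).symm
        subst ha
        exact Or.inr (Or.inr (Or.inl ⟨i, hi, by simp [p3r, R3, SLit.kpBody]⟩))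
      · have : a ∈ (∅ : Set A19) := by rw [show (∅ : Set A19) = R4.head from rfl, hhead]; rfl
        exact absurd this (Set.notMem_empty a)
    · rcases mem_Pifam.1 hrr with ⟨i,hi,rfl⟩|⟨i,hi,rfl⟩|⟨i,hi,rfl⟩|rfl
      · simp only [R1, Set.mem_singleton_iff] at hL
        subst hL
        exact Or.inr (Or.inr (Or.inr (Or.inl ⟨i, hi, by simp [n1r, R1, SLit.knBody]⟩)))
      · simp only [R2, Set.mem_singleton_iff] at hL
        subst hL
        exact Or.inr (Or.inr (Or.inr (Or.inr (Or.inl ⟨i, hi,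
          by simp [n2r, R2, SLit.knBody]⟩))))
      · simp only [R3, Set.mem_singleton_iff] at hL
        subst hL
        exact Or.inr (Or.inr (Or.inr (Or.inr (Or.inr (Or.inl ⟨i, hi,
          by simp [n3r, R3, SLit.knBody]⟩)))))
      · simp only [R4, Set.mem_singleton_iff] at hL
        subst hL
        exact Or.inr (Or.inr (Or.inr (Or.inr (Or.inr (Or.inr (Or.inl
          (by simp [n4r, R4, SLit.knBody])))))))
    · rw [AtE_Pifam] at haAtE
      rcases haAtE with (⟨i,hi,rfl⟩|⟨i,hi,rfl⟩)|rfl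
      · refine Or.inr (Or.inr (Or.inr (Or.inr (Or.inr (Or.inr (Or.inr (Or.inl
          ⟨i, hi, ?_⟩)))))))
        rw [filter_head_aA hi]
        simp [caR]
      · refine Or.inr (Or.inr (Or.inr (Or.inr (Or.inr (Or.inr (Or.inr (Or.inr (Or.inl
          ⟨i, hi, ?_⟩))))))))
        rw [filter_head_nA hi]
        simp [cnaR]
      · refine Or.inr (Or.inr (Or.inr (Or.inr (Or.inr (Or.inr (Or.inr (Or.inr (Or.inr
          ?_))))))))
        rw [filter_head_gA]
        simp [cgR, Set.image_image]
  · rintro (⟨i,hi,rfl⟩|⟨i,hi,rfl⟩|⟨i,hi,rfl⟩|⟨i,hi,rfl⟩|⟨i,hi,rfl⟩|⟨i,hi,rfl⟩|rfl|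
      ⟨i,hi,rfl⟩|⟨i,hi,rfl⟩|rfl)
    · exact Or.inl (Or.inl ⟨R1 i, mem_Pifam.2 (Or.inl ⟨i, hi, rfl⟩), aA i, rfl,
        by simp [p1r, R1, SLit.kpBody]⟩)
    · exact Or.inl (Or.inl ⟨R2 i, mem_Pifam.2 (Or.inr (Or.inl ⟨i, hi, rfl⟩)), nA i, rfl,
        by simp [p2r, R2, SLit.kpBody]⟩)
    · exact Or.inl (Or.inl ⟨R3 i, mem_Pifam.2 (Or.inr (Or.inr (Or.inl ⟨i, hi, rfl⟩))), gA, rfl,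
        by simp [p3r, R3, SLit.kpBody]⟩)
    · exact Or.inl (Or.inr ⟨R1 i, mem_Pifam.2 (Or.inl ⟨i, hi, rfl⟩),
        SLit.nk (Lit.pos (nA i)), rfl, by simp [n1r, R1, SLit.knBody]⟩)
    · exact Or.inl (Or.inr ⟨R2 i, mem_Pifam.2 (Or.inr (Or.inl ⟨i, hi, rfl⟩)),
        SLit.obj (Lit.neg (aA i)), rfl, by simp [n2r, R2, SLit.knBody]⟩)
    · exact Or.inl (Or.inr ⟨R3 i, mem_Pifam.2 (Or.inr (Or.inr (Or.inl ⟨i, hi, rfl⟩))),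
        SLit.obj (Lit.pos (aA i)), rfl, by simp [n3r, R3, SLit.knBody]⟩)
    · exact Or.inl (Or.inr ⟨R4, mem_Pifam.2 (Or.inr (Or.inr (Or.inr rfl))),
        SLit.k (Lit.pos gA), rfl, by simp [n4r, R4, SLit.knBody]⟩)
    · exact Or.inr ⟨aA i, by rw [AtE_Pifam]; exact Or.inl (Or.inl ⟨i, hi, rfl⟩),
        by rw [filter_head_aA hi]; simp [caR]⟩
    · exact Or.inr ⟨nA i, by rw [AtE_Pifam]; exact Or.inl (Or.inr ⟨i, hi, rfl⟩),
        by rw [filter_head_nA hi]; simp [cnaR]⟩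
    · exact Or.inr ⟨gA, by rw [AtE_Pifam]; exact Or.inr rfl,
        by rw [filter_head_gA]; simp [cgR, Set.image_image]⟩

lemma mem_G1 {n : ℕ} {r : Rule (PExt A19)} :
    r ∈ G1 (Pifam n) ↔
      ((∃ i < n, r = m1r i) ∨ (∃ i < n, r = m2r i) ∨ (∃ i < n, r = m3r i) ∨ r = m4r
        ∨ (∃ i < n, r = mchr (nA i)) ∨ r = mchr gA
        ∨ (∃ i < n, r = mcnr (nA i)) ∨ r = mcnr gA)
      ∨ ((∃ i < n, r = p1r i) ∨ (∃ i < n, r = p2r i) ∨ (∃ i < n, r = p3r i) ∨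
          (∃ i < n, r = n1r i) ∨ (∃ i < n, r = n2r i) ∨ (∃ i < n, r = n3r i) ∨ r = n4r ∨
          (∃ i < n, r = caR i) ∨ (∃ i < n, r = cnaR i) ∨ r = cgR n)
      ∨ ((∃ i < n, r = ccr (nA i)) ∨ r = ccr gA) := by
  constructor
  · rintro ((⟨r0, hr0, rfl⟩ | hkp) | ⟨a, haK, rfl⟩)
    · refine Or.inl ?_
      rcases mem_G0.1 hr0 with ⟨i,hi,rfl⟩|⟨i,hi,rfl⟩|⟨i,hi,rfl⟩|rfl|⟨i,hi,rfl⟩|rfl|⟨i,hi,rfl⟩|rfl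
      · exact Or.inl ⟨i, hi, (map_g1r i)⟩
      · exact Or.inr (Or.inl ⟨i, hi, (map_g2r i)⟩)
      · exact Or.inr (Or.inr (Or.inl ⟨i, hi, (map_g3r i)⟩))
      · exact Or.inr (Or.inr (Or.inr (Or.inl map_g4r)))
      · exact Or.inr (Or.inr (Or.inr (Or.inr (Or.inl ⟨i, hi, (map_chr (nA i))⟩))))
      · exact Or.inr (Or.inr (Or.inr (Or.inr (Or.inr (Or.inl (map_chr gA))))))
      · exact Or.inr (Or.inr (Or.inr (Or.inr (Or.inr (Or.inr (Or.inl
          ⟨i, hi, (map_cnr (nA i))⟩))))))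
      · exact Or.inr (Or.inr (Or.inr (Or.inr (Or.inr (Or.inr (Or.inr (map_cnr gA)))))))
    · exact Or.inr (Or.inl (mem_kpProg.1 hkp))
    · refine Or.inr (Or.inr ?_)
      rw [KAtoms_Pifam] at haK
      rcases haK with ⟨i,hi,rfl⟩|rfl
      · exact Or.inl ⟨i, hi, rfl⟩
      · exact Or.inr rfl
  · rintro ((⟨i,hi,rfl⟩|⟨i,hi,rfl⟩|⟨i,hi,rfl⟩|rfl|⟨i,hi,rfl⟩|rfl|⟨i,hi,rfl⟩|rfl) | hkp |
      (⟨i,hi,rfl⟩|rfl))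
    · exact Or.inl (Or.inl ⟨g1r i, mem_G0.2 (Or.inl ⟨i, hi, rfl⟩), map_g1r i⟩)
    · exact Or.inl (Or.inl ⟨g2r i, mem_G0.2 (Or.inr (Or.inl ⟨i, hi, rfl⟩)), map_g2r i⟩)
    · exact Or.inl (Or.inl ⟨g3r i, mem_G0.2 (Or.inr (Or.inr (Or.inl ⟨i, hi, rfl⟩))), map_g3r i⟩)
    · exact Or.inl (Or.inl ⟨g4r, mem_G0.2 (Or.inr (Or.inr (Or.inr (Or.inl rfl)))), map_g4r⟩)
    · exact Or.inl (Or.inl ⟨chr (nA i), mem_G0.2 (Or.inr (Or.inr (Or.inr (Or.inr (Or.inl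
        ⟨i, hi, rfl⟩))))), map_chr (nA i)⟩)
    · exact Or.inl (Or.inl ⟨chr gA, mem_G0.2 (Or.inr (Or.inr (Or.inr (Or.inr (Or.inr (Or.inl
        rfl)))))), map_chr gA⟩)
    · exact Or.inl (Or.inl ⟨cnr (nA i), mem_G0.2 (Or.inr (Or.inr (Or.inr (Or.inr (Or.inr
        (Or.inr (Or.inl ⟨i, hi, rfl⟩))))))), map_cnr (nA i)⟩)
    · exact Or.inl (Or.inl ⟨cnr gA, mem_G0.2 (Or.inr (Or.inr (Or.inr (Or.inr (Or.inr (Or.inr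
        (Or.inr rfl))))))), map_cnr gA⟩)
    · exact Or.inl (Or.inr (mem_kpProg.2 hkp))
    · exact Or.inr ⟨nA i, by rw [KAtoms_Pifam]; exact Or.inl ⟨i, hi, rfl⟩, rfl⟩
    · exact Or.inr ⟨gA, by rw [KAtoms_Pifam]; exact Or.inr rfl, rfl⟩

end G1mem

section M1def

lemma derive_head {α : Type} {P : Program α} {I J : Set α} {r : Rule α} {a : α}
    (hJ : isModel J (reduct P I)) (hrP : r ∈ P) (hhead : r.head = {a})
    (hneg : ∀ L ∈ r.body, L.isNeg → L.sat I)
    (hbody : ∀ L ∈ r.body, ¬ L.isNeg → L.sat J) : a ∈ J := by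
  have h := hJ _ (mem_reduct_of hrP hneg) (by rintro L ⟨hL1, hL2⟩; exact hbody L hL1 hL2)
  rw [hhead] at h
  simpa using h

lemma derive_bot {α : Type} {P : Program α} {I J : Set α} {r : Rule α}
    (hJ : isModel J (reduct P I)) (hrP : r ∈ P) (hhead : r.head = ∅)
    (hneg : ∀ L ∈ r.body, L.isNeg → L.sat I)
    (hbody : ∀ L ∈ r.body, ¬ L.isNeg → L.sat J) : False := by
  have h := hJ _ (mem_reduct_of hrP hneg) (by rintro L ⟨hL1, hL2⟩; exact hbody L hL1 hL2)
  rw [hhead] at h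
  simpa using h

lemma R2_ne_R1 (i j : ℕ) : R2 i ≠ R1 j := fun h => R1_ne_R2 j i h.symm
lemma R3_ne_R1 (i j : ℕ) : R3 i ≠ R1 j := fun h => R1_ne_R3 j i h.symm
lemma R3_ne_R2 (i j : ℕ) : R3 i ≠ R2 j := fun h => R2_ne_R3 j i h.symm
lemma R4_ne_R1 (i : ℕ) : R4 ≠ R1 i := fun h => R1_ne_R4 i h.symm
lemma R4_ne_R3 (i : ℕ) : R4 ≠ R3 i := fun h => R3_ne_R4 i h.symm

/-- The unique stable model of `G1 (Pifam n)`. -/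
def M1 (n : ℕ) : Set (PExt A19) :=
  {x | (∃ i, i < n ∧ (x = aE (nA i) ∨ x = kaE (nA i) ∨ x = knA (aA i) ∨ x = kpA (nA i) ∨
        x = knR (R1 i) ∨ x = knR (R3 i))) ∨ x = knA gA ∨ x = knR R4}

variable {n : ℕ}

lemma M1_aE_nA {j : ℕ} : aE (nA j) ∈ M1 n ↔ j < n := by
  simp [M1, aE, kaE, kpA, knA, knR, aA, nA, gA]
lemma M1_kaE_nA {j : ℕ} : kaE (nA j) ∈ M1 n ↔ j < n := by
  simp [M1, aE, kaE, kpA, knA, knR, aA, nA, gA]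
lemma M1_knA_aA {j : ℕ} : knA (aA j) ∈ M1 n ↔ j < n := by
  simp [M1, aE, kaE, kpA, knA, knR, aA, nA, gA]
lemma M1_kpA_nA {j : ℕ} : kpA (nA j) ∈ M1 n ↔ j < n := by
  simp [M1, aE, kaE, kpA, knA, knR, aA, nA, gA]
lemma M1_knR_R1 {j : ℕ} : knR (R1 j) ∈ M1 n ↔ j < n := by
  simp [M1, aE, kaE, kpA, knA, knR, R1_eq_R1, R1_ne_R3, R1_ne_R4]
lemma M1_knR_R3 {j : ℕ} : knR (R3 j) ∈ M1 n ↔ j < n := by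
  simp [M1, aE, kaE, kpA, knA, knR, R3_eq_R3, R3_ne_R1, R3_ne_R4]
lemma M1_knA_gA : knA gA ∈ M1 n := by
  simp [M1, aE, kaE, kpA, knA, knR, aA, nA, gA]
lemma M1_knR_R4 : knR R4 ∈ M1 n := by
  simp [M1, aE, kaE, kpA, knA, knR]
lemma M1_aE_aA {j : ℕ} : aE (aA j) ∉ M1 n := by
  simp [M1, aE, kaE, kpA, knA, knR, aA, nA, gA]
lemma M1_aE_gA : aE gA ∉ M1 n := by
  simp [M1, aE, kaE, kpA, knA, knR, aA, nA, gA]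
lemma M1_kaE_aA {j : ℕ} : kaE (aA j) ∉ M1 n := by
  simp [M1, aE, kaE, kpA, knA, knR, aA, nA, gA]
lemma M1_kaE_gA : kaE gA ∉ M1 n := by
  simp [M1, aE, kaE, kpA, knA, knR, aA, nA, gA]
lemma M1_kpA_aA {j : ℕ} : kpA (aA j) ∉ M1 n := by
  simp [M1, aE, kaE, kpA, knA, knR, aA, nA, gA]
lemma M1_kpA_gA : kpA gA ∉ M1 n := by
  simp [M1, aE, kaE, kpA, knA, knR, aA, nA, gA]
lemma M1_knA_nA {j : ℕ} : knA (nA j) ∉ M1 n := by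
  simp [M1, aE, kaE, kpA, knA, knR, aA, nA, gA]
lemma M1_knR_R2 {j : ℕ} : knR (R2 j) ∉ M1 n := by
  simp [M1, aE, kaE, kpA, knA, knR, R2_ne_R1, R2_ne_R3, R2_ne_R4]

end M1def

section M1stable

variable {n : ℕ}

lemma m1r_mem {i : ℕ} (hi : i < n) : m1r i ∈ G1 (Pifam n) :=
  mem_G1.2 (Or.inl (Or.inl ⟨i, hi, rfl⟩))
lemma m2r_mem {i : ℕ} (hi : i < n) : m2r i ∈ G1 (Pifam n) :=
  mem_G1.2 (Or.inl (Or.inr (Or.inl ⟨i, hi, rfl⟩)))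
lemma m3r_mem {i : ℕ} (hi : i < n) : m3r i ∈ G1 (Pifam n) :=
  mem_G1.2 (Or.inl (Or.inr (Or.inr (Or.inl ⟨i, hi, rfl⟩))))
lemma m4r_mem : m4r ∈ G1 (Pifam n) :=
  mem_G1.2 (Or.inl (Or.inr (Or.inr (Or.inr (Or.inl rfl)))))
lemma mchr_nA_mem {i : ℕ} (hi : i < n) : mchr (nA i) ∈ G1 (Pifam n) :=
  mem_G1.2 (Or.inl (Or.inr (Or.inr (Or.inr (Or.inr (Or.inl ⟨i, hi, rfl⟩))))))
lemma mchr_gA_mem : mchr gA ∈ G1 (Pifam n) :=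
  mem_G1.2 (Or.inl (Or.inr (Or.inr (Or.inr (Or.inr (Or.inr (Or.inl rfl)))))))
lemma mcnr_nA_mem {i : ℕ} (hi : i < n) : mcnr (nA i) ∈ G1 (Pifam n) :=
  mem_G1.2 (Or.inl (Or.inr (Or.inr (Or.inr (Or.inr (Or.inr (Or.inr (Or.inl ⟨i, hi, rfl⟩))))))))
lemma mcnr_gA_mem : mcnr gA ∈ G1 (Pifam n) :=
  mem_G1.2 (Or.inl (Or.inr (Or.inr (Or.inr (Or.inr (Or.inr (Or.inr (Or.inr rfl))))))))
lemma p1r_mem {i : ℕ} (hi : i < n) : p1r i ∈ G1 (Pifam n) :=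
  mem_G1.2 (Or.inr (Or.inl (Or.inl ⟨i, hi, rfl⟩)))
lemma p2r_mem {i : ℕ} (hi : i < n) : p2r i ∈ G1 (Pifam n) :=
  mem_G1.2 (Or.inr (Or.inl (Or.inr (Or.inl ⟨i, hi, rfl⟩))))
lemma p3r_mem {i : ℕ} (hi : i < n) : p3r i ∈ G1 (Pifam n) :=
  mem_G1.2 (Or.inr (Or.inl (Or.inr (Or.inr (Or.inl ⟨i, hi, rfl⟩)))))
lemma n1r_mem {i : ℕ} (hi : i < n) : n1r i ∈ G1 (Pifam n) :=
  mem_G1.2 (Or.inr (Or.inl (Or.inr (Or.inr (Or.inr (Or.inl ⟨i, hi, rfl⟩))))))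
lemma n2r_mem {i : ℕ} (hi : i < n) : n2r i ∈ G1 (Pifam n) :=
  mem_G1.2 (Or.inr (Or.inl (Or.inr (Or.inr (Or.inr (Or.inr (Or.inl ⟨i, hi, rfl⟩)))))))
lemma n3r_mem {i : ℕ} (hi : i < n) : n3r i ∈ G1 (Pifam n) :=
  mem_G1.2 (Or.inr (Or.inl (Or.inr (Or.inr (Or.inr (Or.inr (Or.inr (Or.inl ⟨i, hi, rfl⟩))))))))
lemma n4r_mem : n4r ∈ G1 (Pifam n) :=
  mem_G1.2 (Or.inr (Or.inl (Or.inr (Or.inr (Or.inr (Or.inr (Or.inr (Or.inr (Or.inl rfl)))))))))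
lemma caR_mem {i : ℕ} (hi : i < n) : caR i ∈ G1 (Pifam n) :=
  mem_G1.2 (Or.inr (Or.inl (Or.inr (Or.inr (Or.inr (Or.inr (Or.inr (Or.inr (Or.inr (Or.inl
    ⟨i, hi, rfl⟩))))))))))
lemma cnaR_mem {i : ℕ} (hi : i < n) : cnaR i ∈ G1 (Pifam n) :=
  mem_G1.2 (Or.inr (Or.inl (Or.inr (Or.inr (Or.inr (Or.inr (Or.inr (Or.inr (Or.inr (Or.inr
    (Or.inl ⟨i, hi, rfl⟩)))))))))))
lemma cgR_mem : cgR n ∈ G1 (Pifam n) :=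
  mem_G1.2 (Or.inr (Or.inl (Or.inr (Or.inr (Or.inr (Or.inr (Or.inr (Or.inr (Or.inr (Or.inr
    (Or.inr rfl)))))))))))
lemma ccr_nA_mem {i : ℕ} (hi : i < n) : ccr (nA i) ∈ G1 (Pifam n) :=
  mem_G1.2 (Or.inr (Or.inr (Or.inl ⟨i, hi, rfl⟩)))
lemma ccr_gA_mem : ccr gA ∈ G1 (Pifam n) :=
  mem_G1.2 (Or.inr (Or.inr (Or.inr rfl)))

/-- `M1 n` satisfies the reduct of `G1 (Pifam n)` w.r.t. any `M` agreeing with it on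
the relevant negated literals. -/
lemma M1_models {M : Set (PExt A19)}
    (h1 : ∀ i, i < n → kaE (nA i) ∈ M) (h2 : kaE gA ∉ M)
    (h3 : ∀ i, i < n → aE (nA i) ∈ M) :
    isModel (M1 n) (reduct (G1 (Pifam n)) M) := by
  rintro r' ⟨r, hrG1, hneg, rfl⟩
  rcases mem_G1.1 hrG1 with
    (⟨i,hi,rfl⟩|⟨i,hi,rfl⟩|⟨i,hi,rfl⟩|rfl|⟨i,hi,rfl⟩|rfl|⟨i,hi,rfl⟩|rfl) |
    (⟨i,hi,rfl⟩|⟨i,hi,rfl⟩|⟨i,hi,rfl⟩|⟨i,hi,rfl⟩|⟨i,hi,rfl⟩|⟨i,hi,rfl⟩|rfl|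
      ⟨i,hi,rfl⟩|⟨i,hi,rfl⟩|rfl) |
    (⟨i,hi,rfl⟩|rfl)
  · -- m1r i
    have := hneg (Lit.neg (kaE (nA i))) (by simp [m1r]) (by simp [Lit.isNeg])
    simp only [Lit.sat] at this
    exact absurd (h1 i hi) this
  · -- m2r i
    intro _
    exact ⟨aE (nA i), by simp [m2r], M1_aE_nA.2 hi⟩
  · -- m3r i
    intro hb
    have := hb (Lit.pos (aE (aA i))) ⟨by simp [m3r], by simp [Lit.isNeg]⟩
    simp only [Lit.sat] at this
    exact absurd this M1_aE_aA
  · -- m4r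
    intro hb
    have := hb (Lit.pos (kaE gA)) ⟨by simp [m4r], by simp [Lit.isNeg]⟩
    simp only [Lit.sat] at this
    exact absurd this M1_kaE_gA
  · -- mchr (nA i)
    intro _
    exact ⟨kaE (nA i), by simp [mchr], M1_kaE_nA.2 hi⟩
  · -- mchr gA
    have := hneg (Lit.nneg (kaE gA)) (by simp [mchr]) (by simp [Lit.isNeg])
    simp only [Lit.sat] at this
    exact absurd this h2
  · -- mcnr (nA i)
    have := hneg (Lit.neg (aE (nA i))) (by simp [mcnr]) (by simp [Lit.isNeg])
    simp only [Lit.sat] at this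
    exact absurd (h3 i hi) this
  · -- mcnr gA
    intro hb
    have := hb (Lit.pos (kaE gA)) ⟨by simp [mcnr], by simp [Lit.isNeg]⟩
    simp only [Lit.sat] at this
    exact absurd this M1_kaE_gA
  · -- p1r i
    have := hneg (Lit.neg (kaE (nA i))) (by simp [p1r]) (by simp [Lit.isNeg])
    simp only [Lit.sat] at this
    exact absurd (h1 i hi) this
  · -- p2r i
    intro _
    exact ⟨kpA (nA i), by simp [p2r], M1_kpA_nA.2 hi⟩
  · -- p3r i
    intro hb
    have := hb (Lit.pos (kpA (aA i))) ⟨by simp [p3r], by simp [Lit.isNeg]⟩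
    simp only [Lit.sat] at this
    exact absurd this M1_kpA_aA
  · -- n1r i
    intro _
    exact ⟨knR (R1 i), by simp [n1r], M1_knR_R1.2 hi⟩
  · -- n2r i
    intro hb
    have := hb (Lit.pos (kpA (aA i))) ⟨by simp [n2r], by simp [Lit.isNeg]⟩
    simp only [Lit.sat] at this
    exact absurd this M1_kpA_aA
  · -- n3r i
    intro _
    exact ⟨knR (R3 i), by simp [n3r], M1_knR_R3.2 hi⟩
  · -- n4r
    intro _
    exact ⟨knR R4, by simp [n4r], M1_knR_R4⟩
  · -- caR i
    intro _
    exact ⟨knA (aA i), by simp [caR], M1_knA_aA.2 hi⟩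
  · -- cnaR i
    intro hb
    have := hb (Lit.pos (knR (R2 i))) ⟨by simp [cnaR], by simp [Lit.isNeg]⟩
    simp only [Lit.sat] at this
    exact absurd this M1_knR_R2
  · -- cgR n
    intro _
    exact ⟨knA gA, by simp [cgR], M1_knA_gA⟩
  · -- ccr (nA i)
    have := hneg (Lit.neg (kaE (nA i))) (by simp [ccr]) (by simp [Lit.isNeg])
    simp only [Lit.sat] at this
    exact absurd (h1 i hi) this
  · -- ccr gA
    intro hb
    have := hb (Lit.pos (kpA gA)) ⟨by simp [ccr], by simp [Lit.isNeg]⟩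
    simp only [Lit.sat] at this
    exact absurd this M1_kpA_gA

/-- positive chain: any model `J` of the reduct w.r.t. a suitable `M`
containing the `kaE`/`aE` facts contains `M1 n`. -/
lemma M1_chain {M J : Set (PExt A19)}
    (hJmod : isModel J (reduct (G1 (Pifam n)) M)) (h2 : kaE gA ∉ M)
    (hkJ : ∀ i, i < n → kaE (nA i) ∈ J) (haJ : ∀ i, i < n → aE (nA i) ∈ J) :
    M1 n ⊆ J := by
  have hn4 : knR R4 ∈ J := by
    refine derive_head hJmod n4r_mem rfl ?_ ?_
    · rintro L hL _
      simp only [n4r, Set.mem_singleton_iff] at hL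
      subst hL
      exact h2
    · rintro L hL hn
      simp only [n4r, Set.mem_singleton_iff] at hL
      subst hL
      exact absurd trivial hn
  have hn1 : ∀ i, i < n → knR (R1 i) ∈ J := by
    intro i hi
    refine derive_head hJmod (n1r_mem hi) rfl ?_ ?_
    · rintro L hL hn
      simp only [n1r, Set.mem_singleton_iff] at hL
      subst hL
      exact absurd hn (by simp [Lit.isNeg])
    · rintro L hL _
      simp only [n1r, Set.mem_singleton_iff] at hL
      subst hL
      exact hkJ i hi
  have hca : ∀ i, i < n → knA (aA i) ∈ J := by
    intro i hi
    refine derive_head hJmod (caR_mem hi) rfl ?_ ?_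
    · rintro L hL hn
      simp only [caR, Set.mem_singleton_iff] at hL
      subst hL
      exact absurd hn (by simp [Lit.isNeg])
    · rintro L hL _
      simp only [caR, Set.mem_singleton_iff] at hL
      subst hL
      exact hn1 i hi
  have hp2 : ∀ i, i < n → kpA (nA i) ∈ J := by
    intro i hi
    refine derive_head hJmod (p2r_mem hi) rfl ?_ ?_
    · rintro L hL hn
      simp only [p2r, Set.mem_singleton_iff] at hL
      subst hL
      exact absurd hn (by simp [Lit.isNeg])
    · rintro L hL _
      simp only [p2r, Set.mem_singleton_iff] at hL
      subst hL
      exact hca i hi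
  have hn3 : ∀ i, i < n → knR (R3 i) ∈ J := by
    intro i hi
    refine derive_head hJmod (n3r_mem hi) rfl ?_ ?_
    · rintro L hL hn
      simp only [n3r, Set.mem_singleton_iff] at hL
      subst hL
      exact absurd hn (by simp [Lit.isNeg])
    · rintro L hL _
      simp only [n3r, Set.mem_singleton_iff] at hL
      subst hL
      exact hca i hi
  have hcg : knA gA ∈ J := by
    refine derive_head hJmod cgR_mem rfl ?_ ?_
    · rintro L hL hn
      simp only [cgR] at hL
      obtain ⟨j, hj, rfl⟩ := hL
      exact absurd hn (by simp [Lit.isNeg])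
    · rintro L hL _
      simp only [cgR] at hL
      obtain ⟨j, hj, rfl⟩ := hL
      exact hn3 j hj
  rintro x (⟨i, hi, rfl | rfl | rfl | rfl | rfl | rfl⟩ | rfl | rfl)
  · exact haJ i hi
  · exact hkJ i hi
  · exact hca i hi
  · exact hp2 i hi
  · exact hn1 i hi
  · exact hn3 i hi
  · exact hcg
  · exact hn4

end M1stable

section Final

lemma M1_stable (n : ℕ) : isStable (G1 (Pifam n)) (M1 n) := by
  constructor
  · exact M1_models (fun i hi => M1_kaE_nA.2 hi) M1_kaE_gA (fun i hi => M1_aE_nA.2 hi)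
  · intro J hJ hJmod
    have hkJ : ∀ i, i < n → kaE (nA i) ∈ J := by
      intro i hi
      refine derive_head hJmod (mchr_nA_mem hi) rfl ?_ ?_
      · rintro L hL _
        simp only [mchr, Set.mem_singleton_iff] at hL
        subst hL
        exact M1_kaE_nA.2 hi
      · rintro L hL hn
        simp only [mchr, Set.mem_singleton_iff] at hL
        subst hL
        exact absurd trivial hn
    have haJ : ∀ i, i < n → aE (nA i) ∈ J := by
      intro i hi
      refine derive_head hJmod (m2r_mem hi) rfl ?_ ?_
      · rintro L hL _
        simp only [m2r, Set.mem_singleton_iff] at hL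
        subst hL
        exact M1_aE_aA
      · rintro L hL hn
        simp only [m2r, Set.mem_singleton_iff] at hL
        subst hL
        exact absurd trivial hn
    exact Set.Subset.antisymm hJ (M1_chain hJmod M1_kaE_gA hkJ haJ)

lemma G1_unique {n : ℕ} {M : Set (PExt A19)} (h : isStable (G1 (Pifam n)) M) :
    M = M1 n := by
  obtain ⟨hmod, hmin⟩ := h
  -- `kaE gA ∉ M`
  have hkg : kaE gA ∉ M := by
    intro hkg
    refine derive_bot hmod m4r_mem rfl ?_ ?_
    · rintro L hL hn
      simp only [m4r, Set.mem_singleton_iff] at hL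
      subst hL
      exact absurd hn (by simp [Lit.isNeg])
    · rintro L hL _
      simp only [m4r, Set.mem_singleton_iff] at hL
      subst hL
      exact hkg
  -- `kaE (nA i) ∈ M`
  have hkna : ∀ i, i < n → kaE (nA i) ∈ M := by
    intro i hi
    by_contra hno
    have h1 : kpA (aA i) ∈ M := by
      refine derive_head hmod (p1r_mem hi) rfl ?_ ?_
      · rintro L hL _
        simp only [p1r, Set.mem_singleton_iff] at hL
        subst hL
        exact hno
      · rintro L hL hn
        simp only [p1r, Set.mem_singleton_iff] at hL
        subst hL
        exact absurd trivial hn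
    have h2 : kpA gA ∈ M := by
      refine derive_head hmod (p3r_mem hi) rfl ?_ ?_
      · rintro L hL hn
        simp only [p3r, Set.mem_singleton_iff] at hL
        subst hL
        exact absurd hn (by simp [Lit.isNeg])
      · rintro L hL _
        simp only [p3r, Set.mem_singleton_iff] at hL
        subst hL
        exact h1
    refine derive_bot hmod ccr_gA_mem rfl ?_ ?_
    · rintro L hL hn
      simp only [ccr] at hL
      rcases hL with rfl | hL
      · exact absurd hn (by simp [Lit.isNeg])
      · simp only [Set.mem_singleton_iff] at hL
        subst hL
        exact hkg
    · rintro L hL hn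
      simp only [ccr] at hL
      rcases hL with rfl | hL
      · exact h2
      · simp only [Set.mem_singleton_iff] at hL
        subst hL
        exact absurd trivial hn
  -- `aE (nA i) ∈ M`
  have hana : ∀ i, i < n → aE (nA i) ∈ M := by
    intro i hi
    by_contra hno
    refine derive_bot hmod (mcnr_nA_mem hi) rfl ?_ ?_
    · rintro L hL hn
      simp only [mcnr] at hL
      rcases hL with rfl | hL
      · exact absurd hn (by simp [Lit.isNeg])
      · simp only [Set.mem_singleton_iff] at hL
        subst hL
        exact hno
    · rintro L hL hn
      simp only [mcnr] at hL
      rcases hL with rfl | hL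
      · exact hkna i hi
      · simp only [Set.mem_singleton_iff] at hL
        subst hL
        exact absurd trivial hn
  have hsub : M1 n ⊆ M := M1_chain hmod hkg hkna hana
  have hMod1 : isModel (M1 n) (reduct (G1 (Pifam n)) M) := M1_models hkna hkg hana
  exact (hmin (M1 n) hsub hMod1).symm

lemma SM_G1_eq (n : ℕ) : SM (G1 (Pifam n)) = {M1 n} := by
  ext M
  constructor
  · intro h
    exact G1_unique h
  · rintro rfl
    exact M1_stable n

end Final

/-- there is a family of epistemic programs `Πₙ` of size `O(n)`
such that `G₀(Πₙ)` has at least `2ⁿ` stable models while `G₁(Πₙ)` has exactly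
one; in particular `2ⁿ · |SM(G₁(Πₙ))| ≤ |SM(G₀(Πₙ))|`. -/
theorem exponential_family :
    ∃ Pi : ℕ → EProgram A19,
      (∃ C : ℕ, ∀ n : ℕ, (Pi n).ncard ≤ C * n + C)
      ∧ ∀ n : ℕ,
          2 ^ n ≤ (SM (G0 (Pi n))).ncard
          ∧ (∃! M, M ∈ SM (G1 (Pi n)))
          ∧ 2 ^ n * (SM (G1 (Pi n))).ncard ≤ (SM (G0 (Pi n))).ncard := by
  refine ⟨Pifam, ⟨3, fun n => Pifam_ncard n⟩, fun n => ?_⟩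
  have hG1 : (SM (G1 (Pifam n))).ncard = 1 := by
    rw [SM_G1_eq]
    exact Set.ncard_singleton _
  refine ⟨G0_count n, ⟨M1 n, M1_stable n, fun M hM => G1_unique hM⟩, ?_⟩
  rw [hG1, mul_one]
  exact G0_count n
end
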